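/- arXiv:1809.05745 — 8 statements merged into one kernel-verified Lean document; each statement's English description precedes it below -/
import Mathlib

section
/- Suppose F and O are both nonempty. Then every feasible schedule has makespan at least max{P(F) + Q(O), 3·q_max, 2·p_max + P(F)}. -/
open Finset

noncomputable section

/-- Processing time of a job: `p` on flow-shop jobs, `q` otherwise. -/
def jobTime {J : Type*} [DecidableEq J] (F : Finset J) (p q : J → ℝ) (j : J) : ℝ :=
  if j ∈ F then p j else q j

/-- Feasibility of a schedule given by start times `S j i` of job `j` on machine `i`
(machines `M1, M2, M3` are machines `0, 1, 2`):
all start times are nonnegative, on each machine the open processing intervals of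
distinct jobs are pairwise disjoint, for each job the open processing intervals on the
three machines are pairwise disjoint, and each flow-shop job goes through
`M1`, `M2`, `M3` in this order. -/
def Feasible {J : Type*} [DecidableEq J] (F O : Finset J) (p q : J → ℝ)
    (S : J → Fin 3 → ℝ) : Prop :=
  (∀ j ∈ F ∪ O, ∀ i : Fin 3, 0 ≤ S j i) ∧
  (∀ i : Fin 3, ∀ j ∈ F ∪ O, ∀ k ∈ F ∪ O, j ≠ k →
    S j i + jobTime F p q j ≤ S k i ∨ S k i + jobTime F p q k ≤ S j i) ∧
  (∀ j ∈ F ∪ O, ∀ i i' : Fin 3, i ≠ i' →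
    S j i + jobTime F p q j ≤ S j i' ∨ S j i' + jobTime F p q j ≤ S j i) ∧
  (∀ j ∈ F, S j 0 + p j ≤ S j 1 ∧ S j 1 + p j ≤ S j 2)

/-- Makespan: supremum of all completion times of the jobs of `F ∪ O`. -/
def makespan {J : Type*} [DecidableEq J] (F O : Finset J) (p q : J → ℝ)
    (S : J → Fin 3 → ℝ) : ℝ :=
  sSup {x : ℝ | ∃ j ∈ F ∪ O, ∃ i : Fin 3, x = S j i + jobTime F p q j}

/-- Interval packing: pairwise-disjoint intervals of positive lengths `t j`
contained in `[a, b]` have total length at most `b - a`. -/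
lemma packing {J : Type*} [DecidableEq J] (s t : J → ℝ) :
    ∀ (T : Finset J) (a b : ℝ), a ≤ b →
      (∀ j ∈ T, 0 < t j) → (∀ j ∈ T, a ≤ s j) → (∀ j ∈ T, s j + t j ≤ b) →
      (∀ j ∈ T, ∀ k ∈ T, j ≠ k → s j + t j ≤ s k ∨ s k + t k ≤ s j) →
      ∑ j ∈ T, t j ≤ b - a := by
  intro T
  induction T using Finset.strongInduction with
  | _ T ih =>
    intro a b hab ht ha hb hd
    rcases T.eq_empty_or_nonempty with rfl | hT
    · simp; linarith
    · obtain ⟨m, hm, hmax⟩ := T.exists_max_image s hT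
      have hsub : T.erase m ⊂ T := Finset.erase_ssubset hm
      have key : ∀ j ∈ T.erase m, s j + t j ≤ s m := by
        intro j hj
        have hjT := Finset.mem_of_mem_erase hj
        have hne := Finset.ne_of_mem_erase hj
        rcases hd j hjT m hm hne with h | h
        · exact h
        · exfalso; have h1 := hmax j hjT; have h2 := ht m hm; linarith
      have h1 : ∑ j ∈ T.erase m, t j ≤ s m - a :=
        ih _ hsub a (s m) (ha m hm)
          (fun j hj => ht j (Finset.mem_of_mem_erase hj))
          (fun j hj => ha j (Finset.mem_of_mem_erase hj)) key
          (fun j hj k hk hne =>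
            hd j (Finset.mem_of_mem_erase hj) k (Finset.mem_of_mem_erase hk) hne)
      have h2 : s m + t m ≤ b := hb m hm
      have h3 : ∑ j ∈ T.erase m, t j + t m = ∑ j ∈ T, t j :=
        Finset.sum_erase_add T t hm
      linarith

/-- Every feasible schedule has makespan at least
`max {P(F) + Q(O), 3 q_max, 2 p_max + P(F)}`. -/
theorem stmt0 {J : Type*} [DecidableEq J] (F O : Finset J) (p q : J → ℝ)
    (hdisj : Disjoint F O)
    (hp : ∀ j ∈ F, 0 < p j) (hq : ∀ j ∈ O, 0 < q j)
    (hF : F.Nonempty) (hO : O.Nonempty)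
    (S : J → Fin 3 → ℝ) (hfeas : Feasible F O p q S) :
    max (max ((∑ j ∈ F, p j) + ∑ j ∈ O, q j) (3 * O.sup' hO q))
        (2 * F.sup' hF p + ∑ j ∈ F, p j) ≤ makespan F O p q S := by
  classical
  obtain ⟨hpos, hmach, hjob, hflow⟩ := hfeas
  -- basic facts about jobTime
  have hjtF : ∀ j ∈ F, jobTime F p q j = p j := fun j hj => if_pos hj
  have hjtO : ∀ j ∈ O, jobTime F p q j = q j := by
    intro j hj
    have : j ∉ F := fun h => (Finset.disjoint_left.mp hdisj h) hj
    exact if_neg this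
  have hjt_pos : ∀ j ∈ F ∪ O, 0 < jobTime F p q j := by
    intro j hj
    rcases Finset.mem_union.mp hj with h | h
    · rw [hjtF j h]; exact hp j h
    · rw [hjtO j h]; exact hq j h
  -- the set of completion times is finite, hence bounded above
  set M := makespan F O p q S with hM
  have hfin : ({x : ℝ | ∃ j ∈ F ∪ O, ∃ i : Fin 3, x = S j i + jobTime F p q j}).Finite := by
    have : {x : ℝ | ∃ j ∈ F ∪ O, ∃ i : Fin 3, x = S j i + jobTime F p q j} =
        (fun ji : J × Fin 3 => S ji.1 ji.2 + jobTime F p q ji.1) ''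
          ((↑(F ∪ O) : Set J) ×ˢ (Set.univ : Set (Fin 3))) := by
      ext x
      constructor
      · rintro ⟨j, hj, i, rfl⟩; exact ⟨(j, i), ⟨hj, trivial⟩, rfl⟩
      · rintro ⟨⟨j, i⟩, ⟨hj, -⟩, rfl⟩; exact ⟨j, hj, i, rfl⟩
    rw [this]
    exact (((F ∪ O).finite_toSet.prod (Set.finite_univ)).image _)
  have hbdd : BddAbove {x : ℝ | ∃ j ∈ F ∪ O, ∃ i : Fin 3, x = S j i + jobTime F p q j} :=
    hfin.bddAbove
  have hcomp : ∀ j ∈ F ∪ O, ∀ i : Fin 3, S j i + jobTime F p q j ≤ M :=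
    fun j hj i => le_csSup hbdd ⟨j, hj, i, rfl⟩
  have hcompF : ∀ j ∈ F, ∀ i : Fin 3, S j i + p j ≤ M := by
    intro j hj i
    have := hcomp j (Finset.mem_union_left _ hj) i
    rwa [hjtF j hj] at this
  -- Bound 1 : P(F) + Q(O) ≤ M
  have hM0 : 0 ≤ M := by
    obtain ⟨j, hj⟩ := hF
    have h1 := hcompF j hj 0
    have h2 := hpos j (Finset.mem_union_left _ hj) 0
    have h3 := hp j hj
    linarith
  have bound1 : (∑ j ∈ F, p j) + ∑ j ∈ O, q j ≤ M := by
    have hpack := packing (fun j => S j 0) (jobTime F p q) (F ∪ O) 0 M hM0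
      hjt_pos (fun j hj => hpos j hj 0) (fun j hj => hcomp j hj 0)
      (fun j hj k hk hne => hmach 0 j hj k hk hne)
    have hsum : ∑ j ∈ F ∪ O, jobTime F p q j = (∑ j ∈ F, p j) + ∑ j ∈ O, q j := by
      rw [Finset.sum_union hdisj]
      congr 1
      · exact Finset.sum_congr rfl hjtF
      · exact Finset.sum_congr rfl hjtO
    linarith [hpack, hsum.symm.le, hsum.le]
  -- Bound 2 : 3 * q_max ≤ M
  have bound2 : 3 * O.sup' hO q ≤ M := by
    obtain ⟨j, hj, hjq⟩ := O.exists_mem_eq_sup' hO q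
    have hjFO : j ∈ F ∪ O := Finset.mem_union_right _ hj
    have hqj : jobTime F p q j = q j := hjtO j hj
    have hpack := packing (fun i : Fin 3 => S j i) (fun _ => q j)
      (Finset.univ : Finset (Fin 3)) 0 M hM0
      (fun _ _ => hq j hj) (fun i _ => hpos j hjFO i)
      (fun i _ => by have := hcomp j hjFO i; rwa [hqj] at this)
      (fun i _ i' _ hne => by
        have := hjob j hjFO i i' hne; rwa [hqj] at this)
    have : ∑ _i : Fin 3, q j = 3 * q j := by
      simp [Finset.sum_const, Finset.card_univ]
    rw [hjq]
    linarith
  -- Bound 3 : 2 * p_max + P(F) ≤ M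
  have bound3 : 2 * F.sup' hF p + ∑ j ∈ F, p j ≤ M := by
    obtain ⟨m, hm, hmp⟩ := F.exists_mem_eq_sup' hF p
    have hmFO : m ∈ F ∪ O := Finset.mem_union_left _ hm
    set A := F.filter (fun j => j ≠ m ∧ S j 0 + p j ≤ S m 0) with hA
    set B := F.filter (fun j => j ≠ m ∧ S m 2 + p m ≤ S j 2) with hB
    set C := (F.erase m).filter (fun j => j ∉ A ∧ j ∉ B) with hC
    -- C jobs start on M1 late and finish on M2 early
    have hCprop : ∀ j ∈ C, S m 0 + p m ≤ S j 0 ∧ S j 2 + p j ≤ S m 2 := by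
      intro j hj
      rw [hC, Finset.mem_filter] at hj
      obtain ⟨hjF', hjA, hjB⟩ := hj
      have hjF := Finset.mem_of_mem_erase hjF'
      have hne : j ≠ m := Finset.ne_of_mem_erase hjF'
      have hjFO : j ∈ F ∪ O := Finset.mem_union_left _ hjF
      constructor
      · rcases hmach 0 j hjFO m hmFO hne with h | h
        · exfalso; exact hjA (Finset.mem_filter.mpr ⟨hjF, hne, by rwa [hjtF j hjF] at h⟩)
        · rwa [hjtF m hm] at h
      · rcases hmach 2 m hmFO j hjFO hne.symm with h | h
        · exfalso; exact hjB (Finset.mem_filter.mpr ⟨hjF, hne, by rwa [hjtF m hm] at h⟩)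
        · rwa [hjtF j hjF] at h
    -- packing of A on machine 0 in [0, S m 0]
    have hSm0 : (0:ℝ) ≤ S m 0 := hpos m hmFO 0
    have hpackA : ∑ j ∈ A, p j ≤ S m 0 - 0 := by
      apply packing (fun j => S j 0) p A 0 (S m 0) hSm0
      · intro j hj; exact hp j (Finset.mem_of_mem_filter j hj)
      · intro j hj; exact hpos j (Finset.mem_union_left _ (Finset.mem_of_mem_filter j hj)) 0
      · intro j hj; exact (Finset.mem_filter.mp hj).2.2
      · intro j hj k hk hne
        have hjF := Finset.mem_of_mem_filter j hj
        have hkF := Finset.mem_of_mem_filter k hk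
        have := hmach 0 j (Finset.mem_union_left _ hjF) k (Finset.mem_union_left _ hkF) hne
        rwa [hjtF j hjF, hjtF k hkF] at this
    -- packing of C ∪ {m} on machine 1 in [S m 0 + p m, S m 2]
    have hflowm := hflow m hm
    have hab2 : S m 0 + p m ≤ S m 2 := by
      have := hp m hm; linarith [hflowm.1, hflowm.2]
    have hpackC : ∑ j ∈ insert m C, p j ≤ S m 2 - (S m 0 + p m) := by
      apply packing (fun j => S j 1) p (insert m C) (S m 0 + p m) (S m 2) hab2
      · intro j hj
        rcases Finset.mem_insert.mp hj with rfl | hj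
        · exact hp j hm
        · exact hp j (Finset.mem_of_mem_erase (Finset.mem_of_mem_filter j hj))
      · intro j hj
        rcases Finset.mem_insert.mp hj with rfl | hj
        · exact hflowm.1
        · have hjF := Finset.mem_of_mem_erase (Finset.mem_of_mem_filter j hj)
          have h1 := (hflow j hjF).1
          have h2 := (hCprop j hj).1
          have := hp j hjF
          linarith
      · intro j hj
        rcases Finset.mem_insert.mp hj with rfl | hj
        · exact hflowm.2
        · have hjF := Finset.mem_of_mem_erase (Finset.mem_of_mem_filter j hj)
          have h1 := (hflow j hjF).2
          have h2 := (hCprop j hj).2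
          have := hp j hjF
          linarith
      · intro j hj k hk hne
        have hmemF : ∀ x ∈ insert m C, x ∈ F := by
          intro x hx
          rcases Finset.mem_insert.mp hx with rfl | hx
          · exact hm
          · exact Finset.mem_of_mem_erase (Finset.mem_of_mem_filter x hx)
        have hjF := hmemF j hj
        have hkF := hmemF k hk
        have := hmach 1 j (Finset.mem_union_left _ hjF) k (Finset.mem_union_left _ hkF) hne
        rwa [hjtF j hjF, hjtF k hkF] at this
    -- packing of B on machine 2 in [S m 2 + p m, M]
    have habB : S m 2 + p m ≤ M := hcompF m hm 2
    have hpackB : ∑ j ∈ B, p j ≤ M - (S m 2 + p m) := by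
      apply packing (fun j => S j 2) p B (S m 2 + p m) M habB
      · intro j hj; exact hp j (Finset.mem_of_mem_filter j hj)
      · intro j hj; exact (Finset.mem_filter.mp hj).2.2
      · intro j hj; exact hcompF j (Finset.mem_of_mem_filter j hj) 2
      · intro j hj k hk hne
        have hjF := Finset.mem_of_mem_filter j hj
        have hkF := Finset.mem_of_mem_filter k hk
        have := hmach 2 j (Finset.mem_union_left _ hjF) k (Finset.mem_union_left _ hkF) hne
        rwa [hjtF j hjF, hjtF k hkF] at this
    -- sum accounting: P(F) ≤ p m + P(A) + P(C) + P(B)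
    have hnonnegF : ∀ j ∈ F, 0 ≤ p j := fun j hj => (hp j hj).le
    have hcover : F.erase m ⊆ A ∪ C ∪ B := by
      intro j hj
      by_cases hjA : j ∈ A
      · exact Finset.mem_union_left _ (Finset.mem_union_left _ hjA)
      by_cases hjB : j ∈ B
      · exact Finset.mem_union_right _ hjB
      · exact Finset.mem_union_left _ (Finset.mem_union_right _
          (Finset.mem_filter.mpr ⟨hj, hjA, hjB⟩))
    have hsub1 : ∀ (X Y : Finset J), X ⊆ F → Y ⊆ F →
        ∑ j ∈ X ∪ Y, p j ≤ ∑ j ∈ X, p j + ∑ j ∈ Y, p j := by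
      intro X Y hX hY
      rw [← Finset.sum_union_inter]
      have : 0 ≤ ∑ j ∈ X ∩ Y, p j :=
        Finset.sum_nonneg fun j hj => hnonnegF j (hX (Finset.mem_inter.mp hj).1)
      linarith
    have hAF : A ⊆ F := Finset.filter_subset _ _
    have hBF : B ⊆ F := Finset.filter_subset _ _
    have hCF : C ⊆ F := fun j hj =>
      Finset.mem_of_mem_erase (Finset.mem_of_mem_filter j hj)
    have hsumErase : ∑ j ∈ F.erase m, p j ≤
        ∑ j ∈ A, p j + ∑ j ∈ C, p j + ∑ j ∈ B, p j := by
      have h1 : ∑ j ∈ F.erase m, p j ≤ ∑ j ∈ A ∪ C ∪ B, p j :=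
        Finset.sum_le_sum_of_subset_of_nonneg hcover
          (fun j hj _ => hnonnegF j (by
            rcases Finset.mem_union.mp hj with h | h
            · rcases Finset.mem_union.mp h with h | h
              · exact hAF h
              · exact hCF h
            · exact hBF h))
      have h2 := hsub1 (A ∪ C) B (Finset.union_subset hAF hCF) hBF
      have h3 := hsub1 A C hAF hCF
      linarith
    have hsumF : ∑ j ∈ F.erase m, p j + p m = ∑ j ∈ F, p j :=
      Finset.sum_erase_add F p hm
    have hmC : ∑ j ∈ insert m C, p j = p m + ∑ j ∈ C, p j := by
      apply Finset.sum_insert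
      intro hmem
      exact absurd rfl (Finset.ne_of_mem_erase (Finset.mem_of_mem_filter m hmem))
    rw [hmp]
    have hCsum : p m + ∑ j ∈ C, p j ≤ S m 2 - (S m 0 + p m) := by
      rw [← hmC]; exact hpackC
    linarith
  -- combine
  exact max_le (max_le bound1 bound2) bound3
end
end

section
/- Suppose F is nonempty and {A, B} is a bipartition of O with Q(A) ≤ p_max and Q(B) ≤ p_max. Then there exists a feasible schedule with makespan exactly 2·p_max + P(F); moreover every feasible schedule has makespan at least 2·p_max + P(F), so this schedule is optimal. -/
open Finset

noncomputable section

section Aux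

variable {J : Type*} [DecidableEq J]

/-- Busy-interval lemma: disjointly scheduled jobs with positive lengths, nonnegative
starts, all finishing by `T`, have total length at most `T`. -/
private lemma lemA (p σ : J → ℝ) :
    ∀ Z : Finset J, ∀ T : ℝ, (∀ j ∈ Z, 0 < p j) → (∀ j ∈ Z, 0 ≤ σ j) →
    (∀ j ∈ Z, ∀ k ∈ Z, j ≠ k → σ j + p j ≤ σ k ∨ σ k + p k ≤ σ j) →
    (∀ j ∈ Z, σ j + p j ≤ T) → 0 ≤ T → ∑ j ∈ Z, p j ≤ T := by
  intro Z
  induction Z using Finset.strongInduction with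
  | _ Z ih =>
    intro T hp hσ hdisj hT hT0
    rcases Z.eq_empty_or_nonempty with rfl | hne
    · simpa using hT0
    obtain ⟨z, hz, hzmax⟩ := Z.exists_max_image σ hne
    have hothers : ∀ j ∈ Z.erase z, σ j + p j ≤ σ z := by
      intro j hj
      have hjZ := Finset.mem_of_mem_erase hj
      rcases hdisj j hjZ z hz (Finset.ne_of_mem_erase hj) with h | h
      · exact h
      · have h1 := hzmax j hjZ
        have h2 := hp z hz
        linarith
    have hrec := ih (Z.erase z) (Finset.erase_ssubset hz) (σ z)
      (fun j hj => hp j (Finset.mem_of_mem_erase hj))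
      (fun j hj => hσ j (Finset.mem_of_mem_erase hj))
      (fun j hj k hk => hdisj j (Finset.mem_of_mem_erase hj) k (Finset.mem_of_mem_erase hk))
      hothers (hσ z hz)
    have hsum := Finset.sum_erase_add Z p hz
    have hzT := hT z hz
    have hzp := hp z hz
    linarith

/-- Step lemma: if every subset of `F` containing `jm` needs time at least
`c + P(Z)` on the previous machine, then on the next machine (where each job starts
only after finishing on the previous one) it needs `c + p jm + P(Z)`. -/
private lemma lemStep (p σ σ' : J → ℝ) (jm : J) (c : ℝ) (F : Finset J)
    (hp : ∀ j ∈ F, 0 < p j)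
    (hdisj : ∀ j ∈ F, ∀ k ∈ F, j ≠ k → σ' j + p j ≤ σ' k ∨ σ' k + p k ≤ σ' j)
    (hflow : ∀ j ∈ F, σ j + p j ≤ σ' j)
    (hprev : ∀ Z ⊆ F, jm ∈ Z → ∀ T, (∀ j ∈ Z, σ j + p j ≤ T) → c + ∑ j ∈ Z, p j ≤ T) :
    ∀ Z ⊆ F, jm ∈ Z → ∀ T, (∀ j ∈ Z, σ' j + p j ≤ T) → c + p jm + ∑ j ∈ Z, p j ≤ T := by
  intro Z
  induction Z using Finset.strongInduction with
  | _ Z ih =>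
    intro hZF hjm T hT
    obtain ⟨z, hz, hzmax⟩ := Z.exists_max_image σ' ⟨jm, hjm⟩
    by_cases hzeq : z = jm
    · subst hzeq
      have h1 : ∀ j ∈ Z, σ j + p j ≤ σ' z := fun j hj =>
        le_trans (hflow j (hZF hj)) (hzmax j hj)
      have h2 := hprev Z hZF hjm _ h1
      have h3 := hT z hz
      linarith
    · have hjm' : jm ∈ Z.erase z := Finset.mem_erase.2 ⟨fun h => hzeq h.symm, hjm⟩
      have hothers : ∀ j ∈ Z.erase z, σ' j + p j ≤ σ' z := by
        intro j hj
        have hjZ := Finset.mem_of_mem_erase hj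
        rcases hdisj j (hZF hjZ) z (hZF hz) (Finset.ne_of_mem_erase hj) with h | h
        · exact h
        · have h1 := hzmax j hjZ
          have h2 := hp z (hZF hz)
          linarith
      have hrec := ih (Z.erase z) (Finset.erase_ssubset hz)
        ((Finset.erase_subset _ _).trans hZF) hjm' (σ' z) hothers
      have hsum := Finset.sum_erase_add Z p hz
      have hzT := hT z hz
      linarith

private lemma makespan_bddAbove (F O : Finset J) (p q : J → ℝ) (S : J → Fin 3 → ℝ) :
    BddAbove {x : ℝ | ∃ j ∈ F ∪ O, ∃ i : Fin 3, x = S j i + jobTime F p q j} := by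
  have hsub : {x : ℝ | ∃ j ∈ F ∪ O, ∃ i : Fin 3, x = S j i + jobTime F p q j}
      ⊆ (fun ji : J × Fin 3 => S ji.1 ji.2 + jobTime F p q ji.1) ''
        ↑((F ∪ O) ×ˢ (Finset.univ : Finset (Fin 3))) := by
    rintro x ⟨j, hj, i, rfl⟩
    exact ⟨(j, i), by simpa [Finset.mem_product, Finset.mem_union] using Finset.mem_union.1 hj, rfl⟩
  exact BddAbove.mono hsub
    ((((F ∪ O) ×ˢ (Finset.univ : Finset (Fin 3))).finite_toSet.image _).bddAbove)

variable [LinearOrder J]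

/-- Offset of job `j` inside the block scheduling of set `s` with durations `t`. -/
private def off (s : Finset J) (t : J → ℝ) (j : J) : ℝ :=
  ∑ k ∈ s.filter (fun k => k < j), t k

private lemma off_nonneg (s : Finset J) (t : J → ℝ) (ht : ∀ k ∈ s, 0 ≤ t k) (j : J) :
    0 ≤ off s t j :=
  Finset.sum_nonneg fun k hk => ht k (Finset.mem_of_mem_filter k hk)

private lemma off_add_le (s : Finset J) (t : J → ℝ) (ht : ∀ k ∈ s, 0 ≤ t k) {j : J}
    (hj : j ∈ s) : off s t j + t j ≤ ∑ k ∈ s, t k := by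
  have hins : insert j (s.filter (fun k => k < j)) ⊆ s := by
    intro x hx
    rcases Finset.mem_insert.1 hx with rfl | hx
    · exact hj
    · exact Finset.mem_of_mem_filter x hx
  have hnot : j ∉ s.filter (fun k => k < j) := by simp
  calc off s t j + t j = ∑ k ∈ insert j (s.filter fun k => k < j), t k := by
        rw [Finset.sum_insert hnot, off, add_comm]
    _ ≤ ∑ k ∈ s, t k := Finset.sum_le_sum_of_subset_of_nonneg hins (fun k hk _ => ht k hk)

private lemma off_sep (s : Finset J) (t : J → ℝ) (ht : ∀ k ∈ s, 0 ≤ t k) {j k : J}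
    (hj : j ∈ s) (hjk : j < k) : off s t j + t j ≤ off s t k := by
  have hins : insert j (s.filter (fun x => x < j)) ⊆ s.filter (fun x => x < k) := by
    intro x hx
    rcases Finset.mem_insert.1 hx with rfl | hx
    · exact Finset.mem_filter.2 ⟨hj, hjk⟩
    · have h := Finset.mem_filter.1 hx
      exact Finset.mem_filter.2 ⟨h.1, lt_trans h.2 hjk⟩
  have hnot : j ∉ s.filter (fun x => x < j) := by simp
  calc off s t j + t j = ∑ x ∈ insert j (s.filter fun x => x < j), t x := by
        rw [Finset.sum_insert hnot, off, add_comm]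
    _ ≤ off s t k := Finset.sum_le_sum_of_subset_of_nonneg hins
        (fun x hx _ => ht x (Finset.mem_of_mem_filter x hx))

private lemma off_disj (s : Finset J) (t : J → ℝ) (ht : ∀ k ∈ s, 0 ≤ t k) {j k : J}
    (hj : j ∈ s) (hk : k ∈ s) (hne : j ≠ k) :
    off s t j + t j ≤ off s t k ∨ off s t k + t k ≤ off s t j := by
  rcases hne.lt_or_gt with h | h
  · exact Or.inl (off_sep s t ht hj h)
  · exact Or.inr (off_sep s t ht hk h)

private lemma off_top (s : Finset J) (t : J → ℝ) {j : J} (hj : j ∈ s)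
    (hmax : ∀ k ∈ s, k ≤ j) : off s t j + t j = ∑ k ∈ s, t k := by
  have hfe : s.filter (fun k => k < j) = s.erase j := by
    ext x
    simp only [Finset.mem_filter, Finset.mem_erase]
    constructor
    · rintro ⟨hx, hlt⟩; exact ⟨ne_of_lt hlt, hx⟩
    · rintro ⟨hne, hx⟩; exact ⟨hx, lt_of_le_of_ne (hmax x hx) hne⟩
  rw [off, hfe]
  exact Finset.sum_erase_add s t hj

/-- The explicit schedule. -/
private def sched (F A B : Finset J) (p q : J → ℝ) (pm P : ℝ) (j : J) : Fin 3 → ℝ :=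
  if j ∈ F then ![off F p j, pm + off F p j, 2 * pm + off F p j]
  else if j ∈ A then ![P + pm + off A q j, off A q j, pm + off A q j]
  else if j ∈ B then ![P + off B q j, P + pm + off B q j, off B q j]
  else ![0, 0, 0]

private lemma sched_F {F A B : Finset J} {p q : J → ℝ} {pm P : ℝ} {j : J} (hj : j ∈ F) :
    sched F A B p q pm P j = ![off F p j, pm + off F p j, 2 * pm + off F p j] := by
  simp only [sched, if_pos hj]

private lemma sched_A {F A B : Finset J} {p q : J → ℝ} {pm P : ℝ} {j : J} (hjF : j ∉ F)
    (hj : j ∈ A) :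
    sched F A B p q pm P j = ![P + pm + off A q j, off A q j, pm + off A q j] := by
  simp only [sched, if_neg hjF, if_pos hj]

private lemma sched_B {F A B : Finset J} {p q : J → ℝ} {pm P : ℝ} {j : J} (hjF : j ∉ F)
    (hjA : j ∉ A) (hj : j ∈ B) :
    sched F A B p q pm P j = ![P + off B q j, P + pm + off B q j, off B q j] := by
  simp only [sched, if_neg hjF, if_neg hjA, if_pos hj]

end Aux

/-- If `{A, B}` is a bipartition of `O` with `Q(A) ≤ p_max` and `Q(B) ≤ p_max`, then
there is a feasible schedule of makespan exactly `2 p_max + P(F)`, and every feasible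
schedule has makespan at least `2 p_max + P(F)`. -/
theorem stmt1 {J : Type*} [DecidableEq J] (F O : Finset J) (p q : J → ℝ)
    (hdisj : Disjoint F O)
    (hp : ∀ j ∈ F, 0 < p j) (hq : ∀ j ∈ O, 0 < q j)
    (hF : F.Nonempty)
    (A B : Finset J) (hABunion : A ∪ B = O) (hABdisj : Disjoint A B)
    (hA : (∑ j ∈ A, q j) ≤ F.sup' hF p) (hB : (∑ j ∈ B, q j) ≤ F.sup' hF p) :
    (∃ S : J → Fin 3 → ℝ, Feasible F O p q S ∧
        makespan F O p q S = 2 * F.sup' hF p + ∑ j ∈ F, p j) ∧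
    (∀ S : J → Fin 3 → ℝ, Feasible F O p q S →
        2 * F.sup' hF p + (∑ j ∈ F, p j) ≤ makespan F O p q S) := by
  classical
  obtain ⟨jm, hjmF, hjmval⟩ := F.exists_mem_eq_sup' hF p
  -- basic quantities
  have hpm_pos : 0 < F.sup' hF p := hjmval ▸ hp jm hjmF
  have hple : ∀ j ∈ F, p j ≤ F.sup' hF p := fun j hj => Finset.le_sup' p hj
  have hpmP : F.sup' hF p ≤ ∑ j ∈ F, p j := by
    rw [hjmval]
    exact Finset.single_le_sum (fun i hi => (hp i hi).le) hjmF
  constructor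
  · -- EXISTENCE of an optimal schedule
    letI : LinearOrder J := WellOrderingRel.isWellOrder.linearOrder
    set pm := F.sup' hF p with hpmdef
    set P := ∑ j ∈ F, p j with hPdef
    have hAO : A ⊆ O := hABunion ▸ Finset.subset_union_left
    have hBO : B ⊆ O := hABunion ▸ Finset.subset_union_right
    have hAnF : ∀ j ∈ A, j ∉ F := fun j hj hjF => Finset.disjoint_left.1 hdisj hjF (hAO hj)
    have hBnF : ∀ j ∈ B, j ∉ F := fun j hj hjF => Finset.disjoint_left.1 hdisj hjF (hBO hj)
    have hBnA : ∀ j ∈ B, j ∉ A := fun j hj => Finset.disjoint_right.1 hABdisj hj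
    have hqA : ∀ k ∈ A, 0 ≤ q k := fun k hk => (hq k (hAO hk)).le
    have hqB : ∀ k ∈ B, 0 ≤ q k := fun k hk => (hq k (hBO hk)).le
    have hpF : ∀ k ∈ F, 0 ≤ p k := fun k hk => (hp k hk).le
    have hQA0 : 0 ≤ ∑ j ∈ A, q j := Finset.sum_nonneg hqA
    have hQB0 : 0 ≤ ∑ j ∈ B, q j := Finset.sum_nonneg hqB
    -- per-job interval bounds
    have keyF : ∀ j ∈ F, 0 ≤ off F p j ∧ off F p j + p j ≤ P := fun j hj =>
      ⟨off_nonneg F p hpF j, off_add_le F p hpF hj⟩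
    have keyA : ∀ j ∈ A, 0 ≤ off A q j ∧ off A q j + q j ≤ ∑ k ∈ A, q k := fun j hj =>
      ⟨off_nonneg A q hqA j, off_add_le A q hqA hj⟩
    have keyB : ∀ j ∈ B, 0 ≤ off B q j ∧ off B q j + q j ≤ ∑ k ∈ B, q k := fun j hj =>
      ⟨off_nonneg B q hqB j, off_add_le B q hqB hj⟩
    have hclass : ∀ x ∈ F ∪ O, x ∈ F ∨ x ∈ A ∨ x ∈ B := by
      intro x hx
      rcases Finset.mem_union.1 hx with h | h
      · exact Or.inl h
      · rw [← hABunion] at h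
        exact Or.inr (Finset.mem_union.1 h)
    have hmemF : ∀ x ∈ F, x ∈ F ∪ O := fun x hx => Finset.mem_union_left _ hx
    refine ⟨sched F A B p q pm P, ⟨?_, ?_, ?_, ?_⟩, ?_⟩
    · -- nonnegative starts
      intro j hj i
      rcases hclass j hj with hjF | hjA | hjB
      · obtain ⟨hx1, hx2⟩ := keyF j hjF
        rw [sched_F hjF]
        fin_cases i <;>
          simp only [Fin.zero_eta, Fin.mk_one, Fin.reduceFinMk, Fin.isValue, Matrix.cons_val_zero, Matrix.cons_val_one, Matrix.head_cons, Matrix.cons_val_two, Matrix.tail_cons] <;> linarith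
      · obtain ⟨hx1, hx2⟩ := keyA j hjA
        rw [sched_A (hAnF j hjA) hjA]
        fin_cases i <;>
          simp only [Fin.zero_eta, Fin.mk_one, Fin.reduceFinMk, Fin.isValue, Matrix.cons_val_zero, Matrix.cons_val_one, Matrix.head_cons, Matrix.cons_val_two, Matrix.tail_cons] <;> linarith
      · obtain ⟨hx1, hx2⟩ := keyB j hjB
        rw [sched_B (hBnF j hjB) (hBnA j hjB) hjB]
        fin_cases i <;>
          simp only [Fin.zero_eta, Fin.mk_one, Fin.reduceFinMk, Fin.isValue, Matrix.cons_val_zero, Matrix.cons_val_one, Matrix.head_cons, Matrix.cons_val_two, Matrix.tail_cons] <;> linarith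
    · -- machine disjointness
      intro i j hj k hk hne
      rcases hclass j hj with hjF | hjA | hjB <;> rcases hclass k hk with hkF | hkA | hkB
      · -- F F
        rw [jobTime, if_pos hjF, jobTime, if_pos hkF, sched_F hjF, sched_F hkF]
        rcases off_disj F p hpF hjF hkF hne with h | h
        · left
          fin_cases i <;>
            simp only [Fin.zero_eta, Fin.mk_one, Fin.reduceFinMk, Fin.isValue, Matrix.cons_val_zero, Matrix.cons_val_one, Matrix.head_cons, Matrix.cons_val_two, Matrix.tail_cons] <;> linarith
        · right
          fin_cases i <;>
            simp only [Fin.zero_eta, Fin.mk_one, Fin.reduceFinMk, Fin.isValue, Matrix.cons_val_zero, Matrix.cons_val_one, Matrix.head_cons, Matrix.cons_val_two, Matrix.tail_cons] <;> linarith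
      · -- F A
        obtain ⟨hx1, hx2⟩ := keyF j hjF; obtain ⟨hy1, hy2⟩ := keyA k hkA
        rw [jobTime, if_pos hjF, jobTime, if_neg (hAnF k hkA), sched_F hjF,
          sched_A (hAnF k hkA) hkA]
        fin_cases i <;>
          simp only [Fin.zero_eta, Fin.mk_one, Fin.reduceFinMk, Fin.isValue, Matrix.cons_val_zero, Matrix.cons_val_one, Matrix.head_cons, Matrix.cons_val_two, Matrix.tail_cons] <;>
          first
            | (left; linarith)
            | (right; linarith)
      · -- F B
        obtain ⟨hx1, hx2⟩ := keyF j hjF; obtain ⟨hy1, hy2⟩ := keyB k hkB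
        rw [jobTime, if_pos hjF, jobTime, if_neg (hBnF k hkB), sched_F hjF,
          sched_B (hBnF k hkB) (hBnA k hkB) hkB]
        fin_cases i <;>
          simp only [Fin.zero_eta, Fin.mk_one, Fin.reduceFinMk, Fin.isValue, Matrix.cons_val_zero, Matrix.cons_val_one, Matrix.head_cons, Matrix.cons_val_two, Matrix.tail_cons] <;>
          first
            | (left; linarith)
            | (right; linarith)
      · -- A F
        obtain ⟨hx1, hx2⟩ := keyA j hjA; obtain ⟨hy1, hy2⟩ := keyF k hkF
        rw [jobTime, if_neg (hAnF j hjA), jobTime, if_pos hkF, sched_A (hAnF j hjA) hjA,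
          sched_F hkF]
        fin_cases i <;>
          simp only [Fin.zero_eta, Fin.mk_one, Fin.reduceFinMk, Fin.isValue, Matrix.cons_val_zero, Matrix.cons_val_one, Matrix.head_cons, Matrix.cons_val_two, Matrix.tail_cons] <;>
          first
            | (left; linarith)
            | (right; linarith)
      · -- A A
        rw [jobTime, if_neg (hAnF j hjA), jobTime, if_neg (hAnF k hkA),
          sched_A (hAnF j hjA) hjA, sched_A (hAnF k hkA) hkA]
        rcases off_disj A q hqA hjA hkA hne with h | h
        · left
          fin_cases i <;>
            simp only [Fin.zero_eta, Fin.mk_one, Fin.reduceFinMk, Fin.isValue, Matrix.cons_val_zero, Matrix.cons_val_one, Matrix.head_cons, Matrix.cons_val_two, Matrix.tail_cons] <;> linarith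
        · right
          fin_cases i <;>
            simp only [Fin.zero_eta, Fin.mk_one, Fin.reduceFinMk, Fin.isValue, Matrix.cons_val_zero, Matrix.cons_val_one, Matrix.head_cons, Matrix.cons_val_two, Matrix.tail_cons] <;> linarith
      · -- A B
        obtain ⟨hx1, hx2⟩ := keyA j hjA; obtain ⟨hy1, hy2⟩ := keyB k hkB
        rw [jobTime, if_neg (hAnF j hjA), jobTime, if_neg (hBnF k hkB),
          sched_A (hAnF j hjA) hjA, sched_B (hBnF k hkB) (hBnA k hkB) hkB]
        fin_cases i <;>
          simp only [Fin.zero_eta, Fin.mk_one, Fin.reduceFinMk, Fin.isValue, Matrix.cons_val_zero, Matrix.cons_val_one, Matrix.head_cons, Matrix.cons_val_two, Matrix.tail_cons] <;>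
          first
            | (left; linarith)
            | (right; linarith)
      · -- B F
        obtain ⟨hx1, hx2⟩ := keyB j hjB; obtain ⟨hy1, hy2⟩ := keyF k hkF
        rw [jobTime, if_neg (hBnF j hjB), jobTime, if_pos hkF,
          sched_B (hBnF j hjB) (hBnA j hjB) hjB, sched_F hkF]
        fin_cases i <;>
          simp only [Fin.zero_eta, Fin.mk_one, Fin.reduceFinMk, Fin.isValue, Matrix.cons_val_zero, Matrix.cons_val_one, Matrix.head_cons, Matrix.cons_val_two, Matrix.tail_cons] <;>
          first
            | (left; linarith)
            | (right; linarith)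
      · -- B A
        obtain ⟨hx1, hx2⟩ := keyB j hjB; obtain ⟨hy1, hy2⟩ := keyA k hkA
        rw [jobTime, if_neg (hBnF j hjB), jobTime, if_neg (hAnF k hkA),
          sched_B (hBnF j hjB) (hBnA j hjB) hjB, sched_A (hAnF k hkA) hkA]
        fin_cases i <;>
          simp only [Fin.zero_eta, Fin.mk_one, Fin.reduceFinMk, Fin.isValue, Matrix.cons_val_zero, Matrix.cons_val_one, Matrix.head_cons, Matrix.cons_val_two, Matrix.tail_cons] <;>
          first
            | (left; linarith)
            | (right; linarith)
      · -- B B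
        rw [jobTime, if_neg (hBnF j hjB), jobTime, if_neg (hBnF k hkB),
          sched_B (hBnF j hjB) (hBnA j hjB) hjB, sched_B (hBnF k hkB) (hBnA k hkB) hkB]
        rcases off_disj B q hqB hjB hkB hne with h | h
        · left
          fin_cases i <;>
            simp only [Fin.zero_eta, Fin.mk_one, Fin.reduceFinMk, Fin.isValue, Matrix.cons_val_zero, Matrix.cons_val_one, Matrix.head_cons, Matrix.cons_val_two, Matrix.tail_cons] <;> linarith
        · right
          fin_cases i <;>
            simp only [Fin.zero_eta, Fin.mk_one, Fin.reduceFinMk, Fin.isValue, Matrix.cons_val_zero, Matrix.cons_val_one, Matrix.head_cons, Matrix.cons_val_two, Matrix.tail_cons] <;> linarith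
    · -- within-job disjointness across machines
      intro j hj i i' hne
      rcases hclass j hj with hjF | hjA | hjB
      · obtain ⟨hx1, hx2⟩ := keyF j hjF
        have hple' := hple j hjF
        rw [jobTime, if_pos hjF, sched_F hjF]
        fin_cases i <;> fin_cases i' <;>
          simp only [Fin.zero_eta, Fin.mk_one, Fin.reduceFinMk, Fin.isValue, Matrix.cons_val_zero, Matrix.cons_val_one, Matrix.head_cons, Matrix.cons_val_two, Matrix.tail_cons] <;>
          first
            | (exact absurd rfl hne)
            | (left; linarith)
            | (right; linarith)
      · obtain ⟨hx1, hx2⟩ := keyA j hjA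
        have hq1 : q j ≤ pm := le_trans (le_trans (by linarith [hx1, hx2]) hA) le_rfl
        have hq2 : pm ≤ P := hpmP
        rw [jobTime, if_neg (hAnF j hjA), sched_A (hAnF j hjA) hjA]
        fin_cases i <;> fin_cases i' <;>
          simp only [Fin.zero_eta, Fin.mk_one, Fin.reduceFinMk, Fin.isValue, Matrix.cons_val_zero, Matrix.cons_val_one, Matrix.head_cons, Matrix.cons_val_two, Matrix.tail_cons] <;>
          first
            | (exact absurd rfl hne)
            | (left; linarith)
            | (right; linarith)
      · obtain ⟨hx1, hx2⟩ := keyB j hjB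
        have hq1 : q j ≤ pm := le_trans (by linarith [hx1, hx2]) hB
        have hq2 : pm ≤ P := hpmP
        rw [jobTime, if_neg (hBnF j hjB), sched_B (hBnF j hjB) (hBnA j hjB) hjB]
        fin_cases i <;> fin_cases i' <;>
          simp only [Fin.zero_eta, Fin.mk_one, Fin.reduceFinMk, Fin.isValue, Matrix.cons_val_zero, Matrix.cons_val_one, Matrix.head_cons, Matrix.cons_val_two, Matrix.tail_cons] <;>
          first
            | (exact absurd rfl hne)
            | (left; linarith)
            | (right; linarith)
    · -- flow-shop precedence
      intro j hj
      have hple' := hple j hj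
      rw [sched_F hj]
      constructor <;>
        simp only [Fin.zero_eta, Fin.mk_one, Fin.reduceFinMk, Fin.isValue, Matrix.cons_val_zero, Matrix.cons_val_one, Matrix.head_cons, Matrix.cons_val_two, Matrix.tail_cons] <;> linarith
    · -- makespan value
      have hgreat : IsGreatest
          {x : ℝ | ∃ j ∈ F ∪ O, ∃ i : Fin 3,
            x = sched F A B p q pm P j i + jobTime F p q j} (2 * pm + P) := by
        constructor
        · obtain ⟨jt, hjt, hjtmax⟩ := F.exists_max_image id hF
          refine ⟨jt, hmemF jt hjt, 2, ?_⟩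
          have htop := off_top F p hjt (fun k hk => hjtmax k hk)
          rw [jobTime, if_pos hjt, sched_F hjt]
          simp only [Matrix.cons_val_two, Matrix.tail_cons, Matrix.head_cons]
          linarith
        · rintro x ⟨j, hj, i, rfl⟩
          rcases hclass j hj with hjF | hjA | hjB
          · obtain ⟨hx1, hx2⟩ := keyF j hjF
            rw [jobTime, if_pos hjF, sched_F hjF]
            fin_cases i <;>
              simp only [Fin.zero_eta, Fin.mk_one, Fin.reduceFinMk, Fin.isValue, Matrix.cons_val_zero, Matrix.cons_val_one, Matrix.head_cons, Matrix.cons_val_two, Matrix.tail_cons] <;> linarith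
          · obtain ⟨hx1, hx2⟩ := keyA j hjA
            rw [jobTime, if_neg (hAnF j hjA), sched_A (hAnF j hjA) hjA]
            fin_cases i <;>
              simp only [Fin.zero_eta, Fin.mk_one, Fin.reduceFinMk, Fin.isValue, Matrix.cons_val_zero, Matrix.cons_val_one, Matrix.head_cons, Matrix.cons_val_two, Matrix.tail_cons] <;> linarith
          · obtain ⟨hx1, hx2⟩ := keyB j hjB
            rw [jobTime, if_neg (hBnF j hjB), sched_B (hBnF j hjB) (hBnA j hjB) hjB]
            fin_cases i <;>
              simp only [Fin.zero_eta, Fin.mk_one, Fin.reduceFinMk, Fin.isValue, Matrix.cons_val_zero, Matrix.cons_val_one, Matrix.head_cons, Matrix.cons_val_two, Matrix.tail_cons] <;> linarith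
      exact hgreat.csSup_eq
  · -- LOWER BOUND
    intro S hS
    obtain ⟨h1, h2, h3, h4⟩ := hS
    have hmemF : ∀ x ∈ F, x ∈ F ∪ O := fun x hx => Finset.mem_union_left _ hx
    have hjt : ∀ j ∈ F, jobTime F p q j = p j := fun j hj => if_pos hj
    have hdisj' : ∀ i : Fin 3, ∀ j ∈ F, ∀ k ∈ F, j ≠ k →
        S j i + p j ≤ S k i ∨ S k i + p k ≤ S j i := by
      intro i j hj k hk hne
      have h := h2 i j (hmemF j hj) k (hmemF k hk) hne
      rwa [hjt j hj, hjt k hk] at h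
    have hbase : ∀ Z ⊆ F, jm ∈ Z → ∀ T, (∀ j ∈ Z, S j 0 + p j ≤ T) →
        (0 : ℝ) + ∑ j ∈ Z, p j ≤ T := by
      intro Z hZF hjmZ T hT
      rw [zero_add]
      refine lemA p (fun j => S j 0) Z T (fun j hj => hp j (hZF hj))
        (fun j hj => h1 j (hmemF j (hZF hj)) 0)
        (fun j hj k hk hne => hdisj' 0 j (hZF hj) k (hZF hk) hne) hT ?_
      have ha := hT jm hjmZ
      have hb := hp jm hjmF
      have hc := h1 jm (hmemF jm hjmF) 0
      linarith
    have hstep1 := lemStep p (fun j => S j 0) (fun j => S j 1) jm 0 F hp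
      (fun j hj k hk hne => hdisj' 1 j hj k hk hne)
      (fun j hj => (h4 j hj).1) hbase
    have hstep2 := lemStep p (fun j => S j 1) (fun j => S j 2) jm (0 + p jm) F hp
      (fun j hj k hk hne => hdisj' 2 j hj k hk hne)
      (fun j hj => (h4 j hj).2) hstep1
    have hfin : ∀ j ∈ F, S j 2 + p j ≤ makespan F O p q S := by
      intro j hj
      have hmem : S j 2 + p j ∈
          {x : ℝ | ∃ j ∈ F ∪ O, ∃ i : Fin 3, x = S j i + jobTime F p q j} :=
        ⟨j, hmemF j hj, 2, by rw [hjt j hj]⟩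
      exact le_csSup (makespan_bddAbove F O p q S) hmem
    have := hstep2 F le_rfl hjmF (makespan F O p q S) hfin
    rw [hjmval]
    linarith

end
end

section
/- Suppose F is nonempty, p_max ≥ q_max, and {A, B} is a bipartition of O with Q(A) ≥ p_max and Q(B) ≥ p_max. Then there exists a feasible schedule with makespan exactly P(F) + Q(O); moreover every feasible schedule has makespan at least P(F) + Q(O), so this schedule is optimal. -/
open Finset

noncomputable section

open Classical in
noncomputable def pre {J : Type*} (T : Finset J) (w : J → ℝ) (j : J) : ℝ :=
  ∑ k ∈ T, if WellOrderingRel k j then w k else 0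

lemma wor_irrefl {J : Type*} (j : J) : ¬ WellOrderingRel j j :=
  _root_.irrefl j

lemma wor_trans {J : Type*} {a b c : J} (h1 : WellOrderingRel a b) (h2 : WellOrderingRel b c) :
    WellOrderingRel a c := _root_.trans h1 h2

lemma wor_tri {J : Type*} (a b : J) : WellOrderingRel a b ∨ a = b ∨ WellOrderingRel b a :=
  trichotomous a b

lemma pre_nonneg {J : Type*} (T : Finset J) (w : J → ℝ) (j : J)
    (hw : ∀ k ∈ T, 0 ≤ w k) : 0 ≤ pre T w j := by
  classical
  unfold pre
  apply Finset.sum_nonneg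
  intro k hk
  split
  · exact hw k hk
  · exact le_rfl

lemma pre_add_le {J : Type*} (T : Finset J) (w : J → ℝ) {j : J} (hj : j ∈ T)
    (hw : ∀ k ∈ T, 0 ≤ w k) : pre T w j + w j ≤ ∑ k ∈ T, w k := by
  classical
  unfold pre
  have h1 : (∑ k ∈ T, if k = j then w k else 0) = w j := by
    rw [Finset.sum_ite_eq' T j w]
    simp [hj]
  calc (∑ k ∈ T, if WellOrderingRel k j then w k else 0) + w j
      = ∑ k ∈ T, ((if WellOrderingRel k j then w k else 0) + (if k = j then w k else 0)) := by
        rw [Finset.sum_add_distrib, h1]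
    _ ≤ ∑ k ∈ T, w k := by
        apply Finset.sum_le_sum
        intro k hk
        by_cases h : WellOrderingRel k j
        · have : k ≠ j := by rintro rfl; exact wor_irrefl k h
          simp [h, this]
        · by_cases h2 : k = j
          · subst h2; simp [wor_irrefl k]
          · simp [h, h2]; exact hw k hk

lemma pre_mono {J : Type*} (T : Finset J) (w : J → ℝ) {j k : J} (hj : j ∈ T)
    (hw : ∀ k ∈ T, 0 ≤ w k) (hr : WellOrderingRel j k) :
    pre T w j + w j ≤ pre T w k := by
  classical
  unfold pre
  have h1 : (∑ x ∈ T, if x = j then w x else 0) = w j := by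
    rw [Finset.sum_ite_eq' T j w]; simp [hj]
  calc (∑ x ∈ T, if WellOrderingRel x j then w x else 0) + w j
      = ∑ x ∈ T, ((if WellOrderingRel x j then w x else 0) + (if x = j then w x else 0)) := by
        rw [Finset.sum_add_distrib, h1]
    _ ≤ ∑ x ∈ T, if WellOrderingRel x k then w x else 0 := by
        apply Finset.sum_le_sum
        intro x hx
        by_cases h : WellOrderingRel x j
        · have hne : x ≠ j := by rintro rfl; exact wor_irrefl x h
          have : WellOrderingRel x k := wor_trans h hr
          simp [h, hne, this]
        · by_cases h2 : x = j
          · subst h2; simp [h, hr]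
          · simp [h, h2]
            split
            · exact hw x hx
            · exact le_refl 0

lemma pre_dicho {J : Type*} (T : Finset J) (w : J → ℝ) {j k : J} (hj : j ∈ T) (hk : k ∈ T)
    (hw : ∀ x ∈ T, 0 ≤ w x) (hne : j ≠ k) :
    pre T w j + w j ≤ pre T w k ∨ pre T w k + w k ≤ pre T w j := by
  rcases wor_tri j k with h | h | h
  · exact Or.inl (pre_mono T w hj hw h)
  · exact absurd h hne
  · exact Or.inr (pre_mono T w hk hw h)

lemma pack {J : Type*} [DecidableEq J] (s t : J → ℝ) (T : Finset J) :
    (∀ j ∈ T, 0 ≤ s j) → (∀ j ∈ T, 0 < t j) →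
    (∀ j ∈ T, ∀ k ∈ T, j ≠ k → s j + t j ≤ s k ∨ s k + t k ≤ s j) →
    ∀ M : ℝ, 0 ≤ M → (∀ j ∈ T, s j + t j ≤ M) → ∑ j ∈ T, t j ≤ M := by
  induction T using Finset.strongInduction with
  | _ T ih =>
    intro hs ht hd M hM hMc
    rcases T.eq_empty_or_nonempty with rfl | hT
    · simpa using hM
    · obtain ⟨j0, hj0, hmax⟩ := T.exists_max_image s hT
      have h1 : ∀ j ∈ T.erase j0, s j + t j ≤ s j0 := by
        intro j hj
        have hjT := Finset.mem_of_mem_erase hj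
        have hne := Finset.ne_of_mem_erase hj
        rcases hd j hjT j0 hj0 hne with h | h
        · exact h
        · exfalso; have := hmax j hjT; nlinarith [ht j0 hj0]
      have h2 : ∑ j ∈ T.erase j0, t j ≤ s j0 :=
        ih (T.erase j0) (Finset.erase_ssubset hj0)
          (fun j hj => hs j (Finset.mem_of_mem_erase hj))
          (fun j hj => ht j (Finset.mem_of_mem_erase hj))
          (fun j hj k hk hne => hd j (Finset.mem_of_mem_erase hj) k (Finset.mem_of_mem_erase hk) hne)
          (s j0) (hs j0 hj0) h1
      have h3 : t j0 + ∑ j ∈ T.erase j0, t j = ∑ j ∈ T, t j := Finset.add_sum_erase T t hj0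
      have h4 := hMc j0 hj0
      linarith

/-- If `p_max ≥ q_max` and `{A, B}` is a bipartition of `O` with `Q(A) ≥ p_max` and
`Q(B) ≥ p_max`, then there is a feasible schedule of makespan exactly `P(F) + Q(O)`,
and every feasible schedule has makespan at least `P(F) + Q(O)`. -/
theorem stmt2 {J : Type*} [DecidableEq J] (F O : Finset J) (p q : J → ℝ)
    (hdisj : Disjoint F O)
    (hp : ∀ j ∈ F, 0 < p j) (hq : ∀ j ∈ O, 0 < q j)
    (hF : F.Nonempty) (hO : O.Nonempty)
    (hpq : O.sup' hO q ≤ F.sup' hF p)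
    (A B : Finset J) (hABunion : A ∪ B = O) (hABdisj : Disjoint A B)
    (hA : F.sup' hF p ≤ ∑ j ∈ A, q j) (hB : F.sup' hF p ≤ ∑ j ∈ B, q j) :
    (∃ S : J → Fin 3 → ℝ, Feasible F O p q S ∧
        makespan F O p q S = (∑ j ∈ F, p j) + ∑ j ∈ O, q j) ∧
    (∀ S : J → Fin 3 → ℝ, Feasible F O p q S →
        (∑ j ∈ F, p j) + (∑ j ∈ O, q j) ≤ makespan F O p q S) := by
  classical
  have hFcopy := hF
  obtain ⟨f0, hf0⟩ := hFcopy
  have hnotF : ∀ j ∈ O, j ∉ F := fun j hj => Finset.disjoint_right.mp hdisj hj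
  have htO : ∀ j ∈ O, jobTime F p q j = q j := fun j hj => if_neg (hnotF j hj)
  have htF : ∀ j ∈ F, jobTime F p q j = p j := fun j hj => if_pos hj
  have htpos : ∀ j ∈ F ∪ O, 0 < jobTime F p q j := by
    intro j hj
    rcases Finset.mem_union.mp hj with h | h
    · rw [htF j h]; exact hp j h
    · rw [htO j h]; exact hq j h
  have hsum : ∑ j ∈ F ∪ O, jobTime F p q j = (∑ j ∈ F, p j) + ∑ j ∈ O, q j := by
    rw [Finset.sum_union hdisj]
    congr 1
    · exact Finset.sum_congr rfl htF
    · exact Finset.sum_congr rfl htO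
  -- lower bound for any feasible schedule
  have lower : ∀ S : J → Fin 3 → ℝ, Feasible F O p q S →
      (∑ j ∈ F, p j) + (∑ j ∈ O, q j) ≤ makespan F O p q S := by
    intro S hS
    obtain ⟨h1, h2, h3, h4⟩ := hS
    have hfin : {x : ℝ | ∃ j ∈ F ∪ O, ∃ i : Fin 3, x = S j i + jobTime F p q j}.Finite := by
      apply Set.Finite.subset (Set.Finite.image
        (f := fun ji : J × Fin 3 => S ji.1 ji.2 + jobTime F p q ji.1)
        (((F ∪ O).finite_toSet.prod Set.finite_univ)))
      rintro x ⟨j, hj, i, rfl⟩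
      exact ⟨(j, i), ⟨hj, trivial⟩, rfl⟩
    have hbdd := hfin.bddAbove
    have hle : ∀ j ∈ F ∪ O, ∀ i : Fin 3, S j i + jobTime F p q j ≤ makespan F O p q S := by
      intro j hj i
      exact le_csSup hbdd ⟨j, hj, i, rfl⟩
    have hf0u : f0 ∈ F ∪ O := Finset.mem_union_left O hf0
    have hM0 : 0 ≤ makespan F O p q S := by
      have := hle f0 hf0u 0
      have := h1 f0 hf0u 0
      have := htpos f0 hf0u
      linarith
    have key := pack (fun j => S j 0) (jobTime F p q) (F ∪ O)
      (fun j hj => h1 j hj 0) htpos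
      (fun j hj k hk hne => h2 0 j hj k hk hne)
      (makespan F O p q S) hM0 (fun j hj => hle j hj 0)
    rw [hsum] at key
    exact key
  refine ⟨?_, lower⟩
  -- construction
  set P := ∑ j ∈ F, p j with hPdef
  set QA := ∑ j ∈ A, q j with hQAdef
  set QB := ∑ j ∈ B, q j with hQBdef
  have hQ : ∑ j ∈ O, q j = QA + QB := by rw [← hABunion, Finset.sum_union hABdisj]
  have hAO : A ⊆ O := by rw [← hABunion]; exact Finset.subset_union_left
  have hBO : B ⊆ O := by rw [← hABunion]; exact Finset.subset_union_right
  have hwF : ∀ k ∈ F, 0 ≤ p k := fun k hk => (hp k hk).le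
  have hwA : ∀ k ∈ A, 0 ≤ q k := fun k hk => (hq k (hAO hk)).le
  have hwB : ∀ k ∈ B, 0 ≤ q k := fun k hk => (hq k (hBO hk)).le
  have h0P : 0 ≤ P := Finset.sum_nonneg hwF
  have h0QA : 0 ≤ QA := Finset.sum_nonneg hwA
  have h0QB : 0 ≤ QB := Finset.sum_nonneg hwB
  have hpmP : F.sup' hF p ≤ P := by
    obtain ⟨f1, hf1, he⟩ := Finset.exists_mem_eq_sup' hF p
    rw [he]; exact Finset.single_le_sum hwF hf1
  have hpQA : ∀ f ∈ F, p f ≤ QA := fun f hf => (Finset.le_sup' p hf).trans hA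
  have hpQB : ∀ f ∈ F, p f ≤ QB := fun f hf => (Finset.le_sup' p hf).trans hB
  have hpP : ∀ f ∈ F, p f ≤ P := fun f hf => (Finset.le_sup' p hf).trans hpmP
  have hqP : ∀ o ∈ O, q o ≤ P := fun o ho => ((Finset.le_sup' q ho).trans hpq).trans hpmP
  have hqQA : ∀ o ∈ O, q o ≤ QA := fun o ho => ((Finset.le_sup' q ho).trans hpq).trans hA
  have hqQB : ∀ o ∈ O, q o ≤ QB := fun o ho => ((Finset.le_sup' q ho).trans hpq).trans hB
  have hnotA : ∀ j ∈ B, j ∉ A := fun j hj => Finset.disjoint_right.mp hABdisj hj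
  have hclass : ∀ j ∈ F ∪ O, j ∈ F ∨ j ∈ A ∨ j ∈ B := by
    intro j hj
    rcases Finset.mem_union.mp hj with h | h
    · exact Or.inl h
    · right; rw [← hABunion] at h; exact Finset.mem_union.mp h
  have hbF : ∀ j ∈ F, pre F p j + p j ≤ P := fun j hj => pre_add_le F p hj hwF
  have hbA : ∀ j ∈ A, pre A q j + q j ≤ QA := fun j hj => pre_add_le A q hj hwA
  have hbB : ∀ j ∈ B, pre B q j + q j ≤ QB := fun j hj => pre_add_le B q hj hwB
  have hnF : ∀ j, 0 ≤ pre F p j := fun j => pre_nonneg F p j hwF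
  have hnA : ∀ j, 0 ≤ pre A q j := fun j => pre_nonneg A q j hwA
  have hnB : ∀ j, 0 ≤ pre B q j := fun j => pre_nonneg B q j hwB
  set S : J → Fin 3 → ℝ := fun j =>
    if j ∈ F then ![pre F p j, QA + pre F p j, QA + QB + pre F p j]
    else if j ∈ A then ![P + QB + pre A q j, pre A q j, QB + pre A q j]
    else ![P + pre B q j, QA + P + pre B q j, pre B q j] with hSdef
  have SF : ∀ j ∈ F, S j = ![pre F p j, QA + pre F p j, QA + QB + pre F p j] := by
    intro j hj; simp only [hSdef]; rw [if_pos hj]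
  have SA : ∀ j ∈ A, S j = ![P + QB + pre A q j, pre A q j, QB + pre A q j] := by
    intro j hj; simp only [hSdef]; rw [if_neg (hnotF j (hAO hj)), if_pos hj]
  have SB : ∀ j ∈ B, S j = ![P + pre B q j, QA + P + pre B q j, pre B q j] := by
    intro j hj; simp only [hSdef]; rw [if_neg (hnotF j (hBO hj)), if_neg (hnotA j hj)]
  have hfe : Feasible F O p q S := by
    refine ⟨?_, ?_, ?_, ?_⟩
    · -- nonneg
      intro j hj i
      rcases hclass j hj with h | h | h
      · fin_cases i <;> simp [SF j h] <;> linarith [hnF j]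
      · fin_cases i <;> simp [SA j h] <;> linarith [hnA j]
      · fin_cases i <;> simp [SB j h] <;> linarith [hnB j]
    · -- machine disjointness
      intro i j hj k hk hne
      rcases hclass j hj with hjF | hjA | hjB <;> rcases hclass k hk with hkF | hkA | hkB
      · rw [htF j hjF, htF k hkF]
        rcases pre_dicho F p hjF hkF hwF hne with h | h
        · left; fin_cases i <;> simp [SF j hjF, SF k hkF] <;> linarith
        · right; fin_cases i <;> simp [SF j hjF, SF k hkF] <;> linarith
      · rw [htF j hjF, htO k (hAO hkA)]
        fin_cases i <;> simp [SF j hjF, SA k hkA] <;>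
          first
            | (left; linarith [hbF j hjF, hbA k hkA, hnF j, hnA k, h0P, h0QA, h0QB])
            | (right; linarith [hbF j hjF, hbA k hkA, hnF j, hnA k, h0P, h0QA, h0QB])
      · rw [htF j hjF, htO k (hBO hkB)]
        fin_cases i <;> simp [SF j hjF, SB k hkB] <;>
          first
            | (left; linarith [hbF j hjF, hbB k hkB, hnF j, hnB k, h0P, h0QA, h0QB])
            | (right; linarith [hbF j hjF, hbB k hkB, hnF j, hnB k, h0P, h0QA, h0QB])
      · rw [htO j (hAO hjA), htF k hkF]
        fin_cases i <;> simp [SA j hjA, SF k hkF] <;>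
          first
            | (left; linarith [hbA j hjA, hbF k hkF, hnA j, hnF k, h0P, h0QA, h0QB])
            | (right; linarith [hbA j hjA, hbF k hkF, hnA j, hnF k, h0P, h0QA, h0QB])
      · rw [htO j (hAO hjA), htO k (hAO hkA)]
        rcases pre_dicho A q hjA hkA hwA hne with h | h
        · left; fin_cases i <;> simp [SA j hjA, SA k hkA] <;> linarith
        · right; fin_cases i <;> simp [SA j hjA, SA k hkA] <;> linarith
      · rw [htO j (hAO hjA), htO k (hBO hkB)]
        fin_cases i <;> simp [SA j hjA, SB k hkB] <;>
          first
            | (left; linarith [hbA j hjA, hbB k hkB, hnA j, hnB k, h0P, h0QA, h0QB])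
            | (right; linarith [hbA j hjA, hbB k hkB, hnA j, hnB k, h0P, h0QA, h0QB])
      · rw [htO j (hBO hjB), htF k hkF]
        fin_cases i <;> simp [SB j hjB, SF k hkF] <;>
          first
            | (left; linarith [hbB j hjB, hbF k hkF, hnB j, hnF k, h0P, h0QA, h0QB])
            | (right; linarith [hbB j hjB, hbF k hkF, hnB j, hnF k, h0P, h0QA, h0QB])
      · rw [htO j (hBO hjB), htO k (hAO hkA)]
        fin_cases i <;> simp [SB j hjB, SA k hkA] <;>
          first
            | (left; linarith [hbB j hjB, hbA k hkA, hnB j, hnA k, h0P, h0QA, h0QB])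
            | (right; linarith [hbB j hjB, hbA k hkA, hnB j, hnA k, h0P, h0QA, h0QB])
      · rw [htO j (hBO hjB), htO k (hBO hkB)]
        rcases pre_dicho B q hjB hkB hwB hne with h | h
        · left; fin_cases i <;> simp [SB j hjB, SB k hkB] <;> linarith
        · right; fin_cases i <;> simp [SB j hjB, SB k hkB] <;> linarith
    · -- same job across machines
      intro j hj i i' hii'
      rcases hclass j hj with h | h | h
      · rw [htF j h]
        fin_cases i <;> fin_cases i' <;>
          first
            | (exact absurd rfl hii')
            | (simp [SF j h]
               first
                 | (left; linarith [hpQA j h, hpQB j h, hpP j h, hnF j, h0P, h0QA, h0QB])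
                 | (right; linarith [hpQA j h, hpQB j h, hpP j h, hnF j, h0P, h0QA, h0QB]))
      · rw [htO j (hAO h)]
        have h1 := hqP j (hAO h); have h2 := hqQA j (hAO h); have h3 := hqQB j (hAO h)
        fin_cases i <;> fin_cases i' <;>
          first
            | (exact absurd rfl hii')
            | (simp [SA j h]
               first
                 | (left; linarith [hnA j, h0P, h0QA, h0QB])
                 | (right; linarith [hnA j, h0P, h0QA, h0QB]))
      · rw [htO j (hBO h)]
        have h1 := hqP j (hBO h); have h2 := hqQA j (hBO h); have h3 := hqQB j (hBO h)
        fin_cases i <;> fin_cases i' <;>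
          first
            | (exact absurd rfl hii')
            | (simp [SB j h]
               first
                 | (left; linarith [hnB j, h0P, h0QA, h0QB])
                 | (right; linarith [hnB j, h0P, h0QA, h0QB]))
    · -- flow order
      intro j hj
      constructor <;> simp [SF j hj] <;> linarith [hpQA j hj, hpQB j hj]
  refine ⟨S, hfe, ?_⟩
  rw [hQ]
  apply le_antisymm
  · apply csSup_le
    · exact ⟨S f0 0 + jobTime F p q f0, f0, Finset.mem_union_left O hf0, 0, rfl⟩
    · rintro x ⟨j, hj, i, rfl⟩
      rcases hclass j hj with h | h | h
      · rw [htF j h]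
        fin_cases i <;> simp [SF j h] <;> linarith [hbF j h, h0P, h0QA, h0QB]
      · rw [htO j (hAO h)]
        fin_cases i <;> simp [SA j h] <;> linarith [hbA j h, h0P, h0QA, h0QB]
      · rw [htO j (hBO h)]
        fin_cases i <;> simp [SB j h] <;> linarith [hbB j h, h0P, h0QA, h0QB]
  · have := lower S hfe
    rw [hQ] at this
    exact this
end
end

section
/- Suppose F is nonempty, Q(O) > p_max, ε ≥ 0, and A ⊆ O satisfies Q(A) ≤ (1+ε)·OPT1 and Q(O \ A) ≤ p_max − ε·OPT1. Then every feasible schedule has makespan at least P(F) + Q(O) + p_max − OPT2. -/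
open Finset

noncomputable section

/-- Pairwise-disjoint open intervals contained in `[a, b]` have total length at most
`b - a`. -/
lemma sum_len_le_of_disjoint {J : Type*} [DecidableEq J] (s t : J → ℝ) (a : ℝ) :
    ∀ T : Finset J, ∀ b : ℝ, a ≤ b →
    (∀ j ∈ T, 0 < t j) → (∀ j ∈ T, a ≤ s j) → (∀ j ∈ T, s j + t j ≤ b) →
    (∀ j ∈ T, ∀ k ∈ T, j ≠ k → s j + t j ≤ s k ∨ s k + t k ≤ s j) →
    ∑ j ∈ T, t j ≤ b - a := by
  intro T
  induction T using Finset.strongInduction with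
  | _ T ih =>
    intro b hab ht hlo hhi hdis
    rcases T.eq_empty_or_nonempty with rfl | hT
    · simp; linarith
    · obtain ⟨m, hm, hmax⟩ := T.exists_max_image s hT
      have hsum : ∑ j ∈ T, t j = t m + ∑ j ∈ T.erase m, t j := (Finset.add_sum_erase T t hm).symm
      have h1 : ∑ j ∈ T.erase m, t j ≤ s m - a := by
        apply ih (T.erase m) (Finset.erase_ssubset hm) (s m) (hlo m hm)
          (fun j hj => ht j (Finset.mem_of_mem_erase hj))
          (fun j hj => hlo j (Finset.mem_of_mem_erase hj))
        · intro j hj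
          have hjT := Finset.mem_of_mem_erase hj
          have hne : j ≠ m := Finset.ne_of_mem_erase hj
          rcases hdis j hjT m hm hne with h | h
          · exact h
          · have h2 := hmax j hjT
            have h3 := ht m hm
            linarith
        · intro j hj k hk hjk
          exact hdis j (Finset.mem_of_mem_erase hj) k (Finset.mem_of_mem_erase hk) hjk
      have h2 := hhi m hm
      linarith

/-- Lemma 3.4: if `Q(O) > p_max`, `Q(A) ≤ (1+ε)·OPT1` and `Q(O \ A) ≤ p_max − ε·OPT1`,
then every feasible schedule has makespan at least `P(F) + Q(O) + p_max − OPT2`, where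
`OPT1 = min {Q(X) : X ⊆ O, Q(X) > p_max}` and `OPT2 = max {Q(Y) : Y ⊆ O, Q(Y) ≤ p_max}`. -/

theorem stmt4 {J : Type*} [DecidableEq J] (F O : Finset J) (p q : J → ℝ)
    (hdisj : Disjoint F O)
    (hp : ∀ j ∈ F, 0 < p j) (hq : ∀ j ∈ O, 0 < q j)
    (hF : F.Nonempty)
    (hQO : F.sup' hF p < ∑ j ∈ O, q j)
    (OPT1 OPT2 : ℝ)
    (hOPT1 : IsLeast {x : ℝ | ∃ X ⊆ O, x = (∑ j ∈ X, q j) ∧ F.sup' hF p < x} OPT1)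
    (hOPT2 : IsGreatest {x : ℝ | ∃ Y ⊆ O, x = (∑ j ∈ Y, q j) ∧ x ≤ F.sup' hF p} OPT2)
    (ε : ℝ) (hε : 0 ≤ ε)
    (A : Finset J) (hAO : A ⊆ O)
    (hA1 : (∑ j ∈ A, q j) ≤ (1 + ε) * OPT1)
    (hA2 : (∑ j ∈ O \ A, q j) ≤ F.sup' hF p - ε * OPT1)
    (S : J → Fin 3 → ℝ) (hfeas : Feasible F O p q S) :
    (∑ j ∈ F, p j) + (∑ j ∈ O, q j) + F.sup' hF p - OPT2 ≤ makespan F O p q S := by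

  classical
  obtain ⟨hS0, hmach, hjobd, hflow⟩ := hfeas
  set pm := F.sup' hF p with hpm
  obtain ⟨jm, hjmF, hjmp⟩ := Finset.exists_mem_eq_sup' hF p
  have hjp : p jm = pm := hjmp.symm
  have htF : ∀ j ∈ F, jobTime F p q j = p j := fun j hj => if_pos hj
  have htO : ∀ j ∈ O, jobTime F p q j = q j := fun j hj =>
    if_neg (fun h => Finset.disjoint_left.mp hdisj h hj)
  have htpos : ∀ j ∈ F ∪ O, 0 < jobTime F p q j := by
    intro j hj
    rcases Finset.mem_union.mp hj with h | h
    · rw [htF j h]; exact hp j h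
    · rw [htO j h]; exact hq j h
  have hbdd : BddAbove {x : ℝ | ∃ j ∈ F ∪ O, ∃ i : Fin 3, x = S j i + jobTime F p q j} := by
    apply Set.Finite.bddAbove
    apply Set.Finite.subset
      (Set.Finite.image (fun jk : J × Fin 3 => S jk.1 jk.2 + jobTime F p q jk.1)
        ((F ∪ O) ×ˢ (Finset.univ : Finset (Fin 3))).finite_toSet)
    rintro x ⟨j, hj, i, rfl⟩
    exact ⟨(j, i), by simpa using hj, rfl⟩
  set M := makespan F O p q S with hM
  have hmk : ∀ j ∈ F ∪ O, ∀ i : Fin 3, S j i + jobTime F p q j ≤ M :=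
    fun j hj i => le_csSup hbdd ⟨j, hj, i, rfl⟩
  have hjmFO : jm ∈ F ∪ O := Finset.mem_union_left _ hjmF
  have hpm0 : 0 < pm := hjp ▸ hp jm hjmF
  have hBpm : pm ≤ S jm 1 := by
    have h0 := hS0 jm hjmFO 0
    have h1 := (hflow jm hjmF).1
    rw [hjp] at h1
    linarith
  set F' := (F.erase jm).filter (fun j => S j 1 + p j ≤ S jm 1) with hF'
  set F'' := (F.erase jm).filter (fun j => ¬ (S j 1 + p j ≤ S jm 1)) with hF''
  set O' := O.filter (fun j => S j 1 + q j ≤ S jm 1) with hO'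
  set O'' := O.filter (fun j => ¬ (S j 1 + q j ≤ S jm 1)) with hO''
  have hF'F : ∀ j ∈ F', j ∈ F := fun j hj => Finset.mem_of_mem_erase (Finset.mem_filter.mp hj).1
  have hF''F : ∀ j ∈ F'', j ∈ F := fun j hj => Finset.mem_of_mem_erase (Finset.mem_filter.mp hj).1
  have hO'O : ∀ j ∈ O', j ∈ O := fun j hj => (Finset.mem_filter.mp hj).1
  have hO''O : ∀ j ∈ O'', j ∈ O := fun j hj => (Finset.mem_filter.mp hj).1
  have hdichF : ∀ j ∈ F'', S jm 1 + pm ≤ S j 1 := by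
    intro j hj
    have hjF := hF''F j hj
    have hne : jm ≠ j := (Finset.ne_of_mem_erase (Finset.mem_filter.mp hj).1).symm
    have hd2 := hmach 1 jm hjmFO j (Finset.mem_union_left _ hjF) hne
    rw [htF jm hjmF, htF j hjF, hjp] at hd2
    rcases hd2 with h | h
    · exact h
    · exact absurd h (Finset.mem_filter.mp hj).2
  have hdichO : ∀ j ∈ O'', S jm 1 + pm ≤ S j 1 := by
    intro j hj
    have hjO := hO''O j hj
    have hne : jm ≠ j := fun h => Finset.disjoint_left.mp hdisj hjmF (h ▸ hjO)
    have hd2 := hmach 1 jm hjmFO j (Finset.mem_union_right _ hjO) hne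
    rw [htF jm hjmF, htO j hjO, hjp] at hd2
    rcases hd2 with h | h
    · exact h
    · exact absurd h (Finset.mem_filter.mp hj).2
  have hMB : S jm 1 + pm ≤ M := by
    have h1 := hmk jm hjmFO 1
    rw [htF jm hjmF, hjp] at h1
    exact h1
  have hsumF' : ∑ j ∈ F', jobTime F p q j = ∑ j ∈ F', p j :=
    Finset.sum_congr rfl (fun j hj => htF j (hF'F j hj))
  have hsumF'' : ∑ j ∈ F'', jobTime F p q j = ∑ j ∈ F'', p j :=
    Finset.sum_congr rfl (fun j hj => htF j (hF''F j hj))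
  have hsumO' : ∑ j ∈ O', jobTime F p q j = ∑ j ∈ O', q j :=
    Finset.sum_congr rfl (fun j hj => htO j (hO'O j hj))
  have hsumO'' : ∑ j ∈ O'', jobTime F p q j = ∑ j ∈ O'', q j :=
    Finset.sum_congr rfl (fun j hj => htO j (hO''O j hj))
  have hjmF' : jm ∉ F' := fun h => Finset.notMem_erase jm F (Finset.mem_filter.mp h).1
  have hjmF'' : jm ∉ F'' := fun h => Finset.notMem_erase jm F (Finset.mem_filter.mp h).1
  have hdisjF'O' : Disjoint F' O' :=
    hdisj.mono (fun j hj => hF'F j hj) (fun j hj => hO'O j hj)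
  have hdisjF''O'' : Disjoint F'' O'' :=
    hdisj.mono (fun j hj => hF''F j hj) (fun j hj => hO''O j hj)
  have hsub' : ∀ j ∈ F' ∪ O', j ∈ F ∪ O := fun j hj =>
    Finset.union_subset (fun x hx => Finset.mem_union_left _ (hF'F x hx))
      (fun x hx => Finset.mem_union_right _ (hO'O x hx)) hj
  have hsub'' : ∀ j ∈ F'' ∪ O'', j ∈ F ∪ O := fun j hj =>
    Finset.union_subset (fun x hx => Finset.mem_union_left _ (hF''F x hx))
      (fun x hx => Finset.mem_union_right _ (hO''O x hx)) hj
  -- (a) : P(F') + Q(O') ≤ S jm 1   (machine 1, interval [0, S jm 1])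
  have ha : ∑ j ∈ F', p j + ∑ j ∈ O', q j ≤ S jm 1 := by
    have key := sum_len_le_of_disjoint (fun j => S j 1) (jobTime F p q) 0 (F' ∪ O') (S jm 1)
      (by linarith)
      (fun j hj => htpos j (hsub' j hj))
      (fun j hj => hS0 j (hsub' j hj) 1)
      (by
        intro j hj
        show S j 1 + jobTime F p q j ≤ S jm 1
        rcases Finset.mem_union.mp hj with h | h
        · rw [htF j (hF'F j h)]; exact (Finset.mem_filter.mp h).2
        · rw [htO j (hO'O j h)]; exact (Finset.mem_filter.mp h).2)
      (fun j hj k hk hjk => hmach 1 j (hsub' j hj) k (hsub' k hk) hjk)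
    rw [Finset.sum_union hdisjF'O', hsumF', hsumO'] at key
    linarith
  -- (b) : pm + P(F') ≤ S jm 1   (machine 0)
  have hb : pm + ∑ j ∈ F', p j ≤ S jm 1 := by
    have hmemT : ∀ j ∈ insert jm F', j ∈ F := by
      intro j hj
      rcases Finset.mem_insert.mp hj with rfl | h
      · exact hjmF
      · exact hF'F j h
    have key := sum_len_le_of_disjoint (fun j => S j 0) (jobTime F p q) 0 (insert jm F')
      (S jm 1) (by linarith)
      (fun j hj => htpos j (Finset.mem_union_left _ (hmemT j hj)))
      (fun j hj => hS0 j (Finset.mem_union_left _ (hmemT j hj)) 0)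
      (by
        intro j hj
        show S j 0 + jobTime F p q j ≤ S jm 1
        rw [htF j (hmemT j hj)]
        rcases Finset.mem_insert.mp hj with rfl | h
        · exact (hflow j hjmF).1
        · have h1 := (hflow j (hF'F j h)).1
          have h2 : S j 1 + p j ≤ S jm 1 := (Finset.mem_filter.mp h).2
          have h3 := hp j (hF'F j h)
          linarith)
      (fun j hj k hk hjk => hmach 0 j (Finset.mem_union_left _ (hmemT j hj)) k
        (Finset.mem_union_left _ (hmemT k hk)) hjk)
    rw [Finset.sum_insert hjmF', htF jm hjmF, hjp] at key
    linarith
  -- (c) : P(F'') + Q(O'') ≤ M - (S jm 1 + pm)   (machine 1)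
  have hc : ∑ j ∈ F'', p j + ∑ j ∈ O'', q j ≤ M - (S jm 1 + pm) := by
    have key := sum_len_le_of_disjoint (fun j => S j 1) (jobTime F p q) (S jm 1 + pm)
      (F'' ∪ O'') M hMB
      (fun j hj => htpos j (hsub'' j hj))
      (by
        intro j hj
        show S jm 1 + pm ≤ S j 1
        rcases Finset.mem_union.mp hj with h | h
        · exact hdichF j h
        · exact hdichO j h)
      (fun j hj => hmk j (hsub'' j hj) 1)
      (fun j hj k hk hjk => hmach 1 j (hsub'' j hj) k (hsub'' k hk) hjk)
    rw [Finset.sum_union hdisjF''O'', hsumF'', hsumO''] at key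
    linarith
  -- (d) : pm + P(F'') ≤ M - (S jm 1 + pm)   (machine 2)
  have hd : pm + ∑ j ∈ F'', p j ≤ M - (S jm 1 + pm) := by
    have hmemT : ∀ j ∈ insert jm F'', j ∈ F := by
      intro j hj
      rcases Finset.mem_insert.mp hj with rfl | h
      · exact hjmF
      · exact hF''F j h
    have key := sum_len_le_of_disjoint (fun j => S j 2) (jobTime F p q) (S jm 1 + pm)
      (insert jm F'') M hMB
      (fun j hj => htpos j (Finset.mem_union_left _ (hmemT j hj)))
      (by
        intro j hj
        show S jm 1 + pm ≤ S j 2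
        rcases Finset.mem_insert.mp hj with rfl | h
        · have h1 := (hflow j hjmF).2
          rw [hjp] at h1
          exact h1
        · have h1 := (hflow j (hF''F j h)).2
          have h2 := hdichF j h
          have h3 := hp j (hF''F j h)
          linarith)
      (fun j hj => hmk j (Finset.mem_union_left _ (hmemT j hj)) 2)
      (fun j hj k hk hjk => hmach 2 j (Finset.mem_union_left _ (hmemT j hj)) k
        (Finset.mem_union_left _ (hmemT k hk)) hjk)
    rw [Finset.sum_insert hjmF'', htF jm hjmF, hjp] at key
    linarith
  -- sum splits
  have e1 : (∑ j ∈ F', p j) + ∑ j ∈ F'', p j = ∑ j ∈ F.erase jm, p j :=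
    Finset.sum_filter_add_sum_filter_not _ _ _
  have e2 : p jm + ∑ j ∈ F.erase jm, p j = ∑ j ∈ F, p j :=
    Finset.add_sum_erase F p hjmF
  have hsplitF : ∑ j ∈ F, p j = pm + ((∑ j ∈ F', p j) + ∑ j ∈ F'', p j) := by
    rw [e1, ← e2, hjp]
  have hsplitO : ∑ j ∈ O, q j = (∑ j ∈ O', q j) + ∑ j ∈ O'', q j :=
    (Finset.sum_filter_add_sum_filter_not O _ q).symm
  -- OPT facts
  have hOPT1pm : pm < OPT1 := by
    obtain ⟨X, hX, hXe, hXgt⟩ := hOPT1.1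
    exact hXgt
  have hQub : ∑ j ∈ O, q j ≤ OPT1 + pm := by
    have hsum : ∑ j ∈ O \ A, q j + ∑ j ∈ A, q j = ∑ j ∈ O, q j := Finset.sum_sdiff hAO
    have hring : (1 + ε) * OPT1 = OPT1 + ε * OPT1 := by ring
    linarith
  -- case analysis
  by_cases h1 : ∑ j ∈ O', q j ≤ pm
  · have hO'le : ∑ j ∈ O', q j ≤ OPT2 :=
      hOPT2.2 ⟨O', Finset.filter_subset _ _, rfl, h1⟩
    linarith
  · by_cases h2 : ∑ j ∈ O'', q j ≤ pm
    · have hO''le : ∑ j ∈ O'', q j ≤ OPT2 :=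
        hOPT2.2 ⟨O'', Finset.filter_subset _ _, rfl, h2⟩
      linarith
    · exfalso
      have g1 : OPT1 ≤ ∑ j ∈ O', q j :=
        hOPT1.2 ⟨O', Finset.filter_subset _ _, rfl, lt_of_not_ge h1⟩
      have g2 : OPT1 ≤ ∑ j ∈ O'', q j :=
        hOPT1.2 ⟨O'', Finset.filter_subset _ _, rfl, lt_of_not_ge h2⟩
      linarith
end
end

section
/- Suppose F is nonempty, p_max ≥ q_max, and {A, B} is a bipartition of O with Q(B) ≤ p_max < Q(A). Then there exists a feasible schedule with makespan exactly P(F) + p_max + Q(A) = P(F) + Q(O) + p_max − Q(B). -/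
open Finset

noncomputable section

lemma packing_aux {J : Type*} [DecidableEq J] (s : Finset J) (w : J → ℝ)
    (hw : ∀ j ∈ s, 0 < w j) :
    ∃ σ : J → ℝ, (∀ j ∈ s, 0 ≤ σ j ∧ σ j + w j ≤ ∑ k ∈ s, w k) ∧
      (∀ j ∈ s, ∀ k ∈ s, j ≠ k → σ j + w j ≤ σ k ∨ σ k + w k ≤ σ j) ∧
      (s.Nonempty → ∃ j ∈ s, σ j + w j = ∑ k ∈ s, w k) := by
  induction s using Finset.induction_on with
  | empty => exact ⟨0, by simp, by simp, by simp⟩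
  | @insert a t ha ih =>
    obtain ⟨σ, h1, h2, h3⟩ := ih (fun j hj => hw j (mem_insert_of_mem hj))
    have hwt : 0 ≤ ∑ k ∈ t, w k :=
      Finset.sum_nonneg fun k hk => (hw k (mem_insert_of_mem hk)).le
    have hwa : 0 < w a := hw a (mem_insert_self a t)
    have hsum : ∑ k ∈ insert a t, w k = w a + ∑ k ∈ t, w k := Finset.sum_insert ha
    refine ⟨Function.update σ a (∑ k ∈ t, w k), ?_, ?_, ?_⟩
    · intro j hj
      by_cases hja : j = a
      · subst hja
        rw [Function.update_self, hsum]
        exact ⟨hwt, by linarith⟩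
      · have hjt : j ∈ t := (Finset.mem_insert.mp hj).resolve_left hja
        rw [Function.update_of_ne hja, hsum]
        obtain ⟨e1, e2⟩ := h1 j hjt
        exact ⟨e1, by linarith⟩
    · intro j hj k hk hjk
      by_cases hja : j = a
      · subst hja
        have hka : k ≠ j := fun h => hjk h.symm
        have hkt : k ∈ t := (Finset.mem_insert.mp hk).resolve_left hka
        rw [Function.update_self, Function.update_of_ne hka]
        exact Or.inr (h1 k hkt).2
      · have hjt : j ∈ t := (Finset.mem_insert.mp hj).resolve_left hja
        by_cases hka : k = a
        · subst hka
          rw [Function.update_self, Function.update_of_ne hja]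
          exact Or.inl (h1 j hjt).2
        · have hkt : k ∈ t := (Finset.mem_insert.mp hk).resolve_left hka
          rw [Function.update_of_ne hja, Function.update_of_ne hka]
          exact h2 j hjt k hkt hjk
    · intro _
      refine ⟨a, mem_insert_self a t, ?_⟩
      rw [Function.update_self, hsum]; ring

/-- If `p_max ≥ q_max` and `{A, B}` is a bipartition of `O` with `Q(B) ≤ p_max < Q(A)`,
then there is a feasible schedule of makespan exactly
`P(F) + p_max + Q(A) = P(F) + Q(O) + p_max − Q(B)`. -/
theorem stmt5 {J : Type*} [DecidableEq J] (F O : Finset J) (p q : J → ℝ)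
    (hdisj : Disjoint F O)
    (hp : ∀ j ∈ F, 0 < p j) (hq : ∀ j ∈ O, 0 < q j)
    (hF : F.Nonempty) (hO : O.Nonempty)
    (hpq : O.sup' hO q ≤ F.sup' hF p)
    (A B : Finset J) (hABunion : A ∪ B = O) (hABdisj : Disjoint A B)
    (hB : (∑ j ∈ B, q j) ≤ F.sup' hF p) (hA : F.sup' hF p < ∑ j ∈ A, q j) :
    ∃ S : J → Fin 3 → ℝ, Feasible F O p q S ∧
      makespan F O p q S = (∑ j ∈ F, p j) + F.sup' hF p + (∑ j ∈ A, q j) ∧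
      (∑ j ∈ F, p j) + F.sup' hF p + (∑ j ∈ A, q j)
        = (∑ j ∈ F, p j) + (∑ j ∈ O, q j) + F.sup' hF p - ∑ j ∈ B, q j := by
  classical
  set pmax := F.sup' hF p with hpmdef
  set P := ∑ j ∈ F, p j with hPdef
  set QA := ∑ j ∈ A, q j with hQAdef
  set QB := ∑ j ∈ B, q j with hQBdef
  have hAO : A ⊆ O := hABunion ▸ Finset.subset_union_left
  have hBO : B ⊆ O := hABunion ▸ Finset.subset_union_right
  obtain ⟨σF, pF1, pF2, pF3⟩ := packing_aux F p hp
  obtain ⟨σA, pA1, pA2, _⟩ := packing_aux A q (fun j hj => hq j (hAO hj))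
  obtain ⟨σB, pB1, pB2, _⟩ := packing_aux B q (fun j hj => hq j (hBO hj))
  have hple : ∀ j ∈ F, p j ≤ pmax := fun j hj => Finset.le_sup' p hj
  have hqle : ∀ j ∈ O, q j ≤ pmax := fun j hj => le_trans (Finset.le_sup' q hj) hpq
  have hpmax_pos : 0 < pmax := by
    obtain ⟨j0, hj0⟩ := hF
    exact lt_of_lt_of_le (hp j0 hj0) (Finset.le_sup' p hj0)
  have hpmP : pmax ≤ P := by
    obtain ⟨j1, hj1, hj1e⟩ := Finset.exists_mem_eq_sup' hF p
    rw [hpmdef, hj1e, hPdef]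
    exact Finset.single_le_sum (fun i hi => (hp i hi).le) hj1
  have hQB0 : 0 ≤ QB := Finset.sum_nonneg fun j hj => (hq j (hBO hj)).le
  have hQApm : pmax < QA := hA
  have hQBpm : QB ≤ pmax := hB
  have hFA : ∀ j ∈ A, j ∉ F := fun j hj hjF =>
    (Finset.disjoint_left.mp hdisj hjF) (hAO hj)
  have hFB : ∀ j ∈ B, j ∉ F := fun j hj hjF =>
    (Finset.disjoint_left.mp hdisj hjF) (hBO hj)
  have hABx : ∀ j ∈ B, j ∉ A := fun j hj => Finset.disjoint_right.mp hABdisj hj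
  have hclass : ∀ j ∈ F ∪ O, j ∈ F ∨ j ∈ A ∨ j ∈ B := by
    intro j hj
    rcases Finset.mem_union.mp hj with h | h
    · exact Or.inl h
    · rw [← hABunion] at h
      exact Or.inr (Finset.mem_union.mp h)
  have hOsum : ∑ j ∈ O, q j = QA + QB := by
    rw [← hABunion, Finset.sum_union hABdisj]
  refine ⟨fun j i =>
      if j ∈ F then ![σF j, pmax + σF j, pmax + QA + σF j] i
      else if j ∈ A then ![P + σA j, P + pmax + σA j, σA j] i
      else if j ∈ B then ![P + QA + σB j, σB j, QA + σB j] i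
      else 0, ⟨?_, ?_, ?_, ?_⟩, ?_, ?_⟩
  · -- nonnegativity
    intro j hj i
    rcases hclass j hj with hj1 | hj1 | hj1
    · obtain ⟨u1, u2⟩ := pF1 j hj1
      fin_cases i <;> simp [hj1] <;> linarith
    · obtain ⟨u1, u2⟩ := pA1 j hj1
      fin_cases i <;> simp [hFA j hj1, hj1] <;> linarith
    · obtain ⟨u1, u2⟩ := pB1 j hj1
      fin_cases i <;> simp [hFB j hj1, hABx j hj1, hj1] <;> linarith
  · -- machine disjointness
    intro i j hj k hk hjk
    rcases hclass j hj with hj1 | hj1 | hj1 <;> rcases hclass k hk with hk1 | hk1 | hk1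
    · rcases pF2 j hj1 k hk1 hjk with h | h <;>
        fin_cases i <;> simp [jobTime, hj1, hk1] <;>
        first | (left; linarith) | (right; linarith)
    · obtain ⟨u1, u2⟩ := pF1 j hj1; obtain ⟨v1, v2⟩ := pA1 k hk1
      have u3 := hple j hj1; have v3 := hqle k (hAO hk1)
      fin_cases i <;> simp [jobTime, hj1, hFA k hk1, hk1] <;>
        first | (left; linarith) | (right; linarith)
    · obtain ⟨u1, u2⟩ := pF1 j hj1; obtain ⟨v1, v2⟩ := pB1 k hk1
      have u3 := hple j hj1; have v3 := hqle k (hBO hk1)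
      fin_cases i <;> simp [jobTime, hj1, hFB k hk1, hABx k hk1, hk1] <;>
        first | (left; linarith) | (right; linarith)
    · obtain ⟨u1, u2⟩ := pA1 j hj1; obtain ⟨v1, v2⟩ := pF1 k hk1
      have u3 := hqle j (hAO hj1); have v3 := hple k hk1
      fin_cases i <;> simp [jobTime, hFA j hj1, hj1, hk1] <;>
        first | (left; linarith) | (right; linarith)
    · rcases pA2 j hj1 k hk1 hjk with h | h <;>
        fin_cases i <;> simp [jobTime, hFA j hj1, hj1, hFA k hk1, hk1] <;>
        first | (left; linarith) | (right; linarith)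
    · obtain ⟨u1, u2⟩ := pA1 j hj1; obtain ⟨v1, v2⟩ := pB1 k hk1
      have u3 := hqle j (hAO hj1); have v3 := hqle k (hBO hk1)
      fin_cases i <;> simp [jobTime, hFA j hj1, hj1, hFB k hk1, hABx k hk1, hk1] <;>
        first | (left; linarith) | (right; linarith)
    · obtain ⟨u1, u2⟩ := pB1 j hj1; obtain ⟨v1, v2⟩ := pF1 k hk1
      have u3 := hqle j (hBO hj1); have v3 := hple k hk1
      fin_cases i <;> simp [jobTime, hFB j hj1, hABx j hj1, hj1, hk1] <;>
        first | (left; linarith) | (right; linarith)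
    · obtain ⟨u1, u2⟩ := pB1 j hj1; obtain ⟨v1, v2⟩ := pA1 k hk1
      have u3 := hqle j (hBO hj1); have v3 := hqle k (hAO hk1)
      fin_cases i <;> simp [jobTime, hFB j hj1, hABx j hj1, hj1, hFA k hk1, hk1] <;>
        first | (left; linarith) | (right; linarith)
    · rcases pB2 j hj1 k hk1 hjk with h | h <;>
        fin_cases i <;>
        simp [jobTime, hFB j hj1, hABx j hj1, hj1, hFB k hk1, hABx k hk1, hk1] <;>
        first | (left; linarith) | (right; linarith)
  · -- per-job machine disjointness
    intro j hj i i' hii'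
    rcases hclass j hj with hj1 | hj1 | hj1
    · obtain ⟨u1, u2⟩ := pF1 j hj1; have u3 := hple j hj1
      fin_cases i <;> fin_cases i' <;>
        first
        | exact absurd rfl hii'
        | (simp [jobTime, hj1]; first | (left; linarith) | (right; linarith))
    · obtain ⟨u1, u2⟩ := pA1 j hj1; have u3 := hqle j (hAO hj1)
      fin_cases i <;> fin_cases i' <;>
        first
        | exact absurd rfl hii'
        | (simp [jobTime, hFA j hj1, hj1]; first | (left; linarith) | (right; linarith))
    · obtain ⟨u1, u2⟩ := pB1 j hj1; have u3 := hqle j (hBO hj1)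
      fin_cases i <;> fin_cases i' <;>
        first
        | exact absurd rfl hii'
        | (simp [jobTime, hFB j hj1, hABx j hj1, hj1];
           first | (left; linarith) | (right; linarith))
  · -- flow order
    intro j hj1
    obtain ⟨u1, u2⟩ := pF1 j hj1; have u3 := hple j hj1
    constructor <;> simp [hj1] <;> linarith
  · -- makespan
    have hub : ∀ x ∈ {x : ℝ | ∃ j ∈ F ∪ O, ∃ i : Fin 3,
        x = (fun j i =>
          if j ∈ F then ![σF j, pmax + σF j, pmax + QA + σF j] i
          else if j ∈ A then ![P + σA j, P + pmax + σA j, σA j] i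
          else if j ∈ B then ![P + QA + σB j, σB j, QA + σB j] i
          else 0) j i + jobTime F p q j}, x ≤ P + pmax + QA := by
      intro x hx
      obtain ⟨j, hj, i, rfl⟩ := hx
      rcases hclass j hj with hj1 | hj1 | hj1
      · obtain ⟨u1, u2⟩ := pF1 j hj1; have u3 := hple j hj1
        fin_cases i <;> simp [jobTime, hj1] <;> linarith
      · obtain ⟨u1, u2⟩ := pA1 j hj1; have u3 := hqle j (hAO hj1)
        fin_cases i <;> simp [jobTime, hFA j hj1, hj1] <;> linarith
      · obtain ⟨u1, u2⟩ := pB1 j hj1; have u3 := hqle j (hBO hj1)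
        fin_cases i <;> simp [jobTime, hFB j hj1, hABx j hj1, hj1] <;> linarith
    have hmem : (P + pmax + QA) ∈ {x : ℝ | ∃ j ∈ F ∪ O, ∃ i : Fin 3,
        x = (fun j i =>
          if j ∈ F then ![σF j, pmax + σF j, pmax + QA + σF j] i
          else if j ∈ A then ![P + σA j, P + pmax + σA j, σA j] i
          else if j ∈ B then ![P + QA + σB j, σB j, QA + σB j] i
          else 0) j i + jobTime F p q j} := by
      obtain ⟨j1, hj1, hj1e⟩ := pF3 hF
      refine ⟨j1, Finset.mem_union_left O hj1, 2, ?_⟩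
      simp [jobTime, hj1]
      linarith
    show sSup _ = P + pmax + QA
    exact le_antisymm (csSup_le ⟨_, hmem⟩ hub) (le_csSup ⟨_, fun x hx => hub x hx⟩ hmem)
  · rw [hOsum]; ring
end
end

section
/- Suppose F is nonempty, p_max ≥ q_max, Q(O) > p_max and ε > 0. Suppose A ⊆ O satisfies p_max < Q(A) ≤ (1+ε)·OPT1 and Q(O \ A) ≤ p_max − ε·OPT1, and B ⊆ O satisfies Q(B) ≤ p_max and Q(B) ≥ (1−ε)·OPT2. Then there exists a feasible schedule π such that makespan(π) < (1+ε)·makespan(σ) for every feasible schedule σ. -/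
open Finset

noncomputable section

section Helpers
variable {J : Type*} [DecidableEq J]


section ListStart
variable {J : Type*} [DecidableEq J]

def lstart (w : J → ℝ) (L : List J) (j : J) : ℝ :=
  ((L.takeWhile (· != j)).map w).sum

lemma lstart_nonneg (w : J → ℝ) (L : List J) (j : J) (hw : ∀ x ∈ L, 0 ≤ w x) :
    0 ≤ lstart w L j := by
  refine List.sum_nonneg ?_
  intro x hx
  simp only [List.mem_map] at hx
  obtain ⟨y, hy, rfl⟩ := hx
  exact hw y ((List.takeWhile_sublist _).subset hy)

lemma lstart_cons_self (w : J → ℝ) (L : List J) (j : J) :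
    lstart w (j :: L) j = 0 := by
  simp [lstart, List.takeWhile]

lemma lstart_cons_ne (w : J → ℝ) (L : List J) (a j : J) (h : a ≠ j) :
    lstart w (a :: L) j = w a + lstart w L j := by
  have hb : (a != j) = true := by simp [h]
  simp [lstart, List.takeWhile, hb]

lemma mem_of_cons_ne {a j : J} {tl : List J} (hj : j ∈ a :: tl) (h : a ≠ j) : j ∈ tl := by
  rcases List.mem_cons.mp hj with h' | h'
  · exact absurd h'.symm h
  · exact h'

lemma lstart_add_le (w : J → ℝ) (L : List J) (j : J) (hw : ∀ x ∈ L, 0 ≤ w x)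
    (hj : j ∈ L) : lstart w L j + w j ≤ (L.map w).sum := by
  induction L with
  | nil => simp at hj
  | cons a tl ih =>
    by_cases hne : a = j
    · subst hne
      rw [lstart_cons_self]
      simp only [List.map_cons, List.sum_cons]
      have : 0 ≤ (tl.map w).sum := by
        refine List.sum_nonneg ?_
        intro x hx
        simp only [List.mem_map] at hx
        obtain ⟨y, hy, rfl⟩ := hx
        exact hw y (List.mem_cons_of_mem _ hy)
      linarith
    · rw [lstart_cons_ne w tl a j hne]
      simp only [List.map_cons, List.sum_cons]
      have := ih (fun x hx => hw x (List.mem_cons_of_mem _ hx)) (mem_of_cons_ne hj hne)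
      linarith

lemma lstart_disj (w : J → ℝ) (L : List J) (j k : J) (hw : ∀ x ∈ L, 0 ≤ w x)
    (hnd : L.Nodup) (hj : j ∈ L) (hk : k ∈ L) (hjk : j ≠ k) :
    lstart w L j + w j ≤ lstart w L k ∨ lstart w L k + w k ≤ lstart w L j := by
  induction L with
  | nil => simp at hj
  | cons a tl ih =>
    have hwtl : ∀ x ∈ tl, 0 ≤ w x := fun x hx => hw x (List.mem_cons_of_mem _ hx)
    by_cases hne : a = j
    · subst hne
      left
      rw [lstart_cons_self, lstart_cons_ne w tl a k hjk]
      have := lstart_nonneg w tl k hwtl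
      linarith
    · by_cases hnek : a = k
      · subst hnek
        right
        rw [lstart_cons_self, lstart_cons_ne w tl a j hne]
        have := lstart_nonneg w tl j hwtl
        linarith
      · rw [lstart_cons_ne w tl a j hne, lstart_cons_ne w tl a k hnek]
        rcases ih hwtl (List.Nodup.of_cons hnd) (mem_of_cons_ne hj hne)
          (mem_of_cons_ne hk hnek) with h | h
        · left; linarith
        · right; linarith

end ListStart

section SumIntervals
variable {J : Type*} [DecidableEq J]

lemma sum_intervals_le_aux (s t : J → ℝ) (a : ℝ) :
    ∀ n : ℕ, ∀ S : Finset J, S.card ≤ n → ∀ b : ℝ, a ≤ b →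
    (∀ j ∈ S, 0 < t j) → (∀ j ∈ S, a ≤ s j) → (∀ j ∈ S, s j + t j ≤ b) →
    (∀ j ∈ S, ∀ k ∈ S, j ≠ k → s j + t j ≤ s k ∨ s k + t k ≤ s j) →
    ∑ j ∈ S, t j ≤ b - a := by
  intro n
  induction n with
  | zero =>
    intro S hcard b hab _ _ _ _
    have : S = ∅ := Finset.card_eq_zero.mp (Nat.le_zero.mp hcard)
    subst this; simp; linarith
  | succ n ih =>
    intro S hcard b hab ht hlo hhi hd
    rcases S.eq_empty_or_nonempty with rfl | hne
    · simp; linarith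
    · obtain ⟨m, hm, hmax⟩ := S.exists_max_image s hne
      have hother : ∀ j ∈ S.erase m, s j + t j ≤ s m := by
        intro j hj
        have hjS := Finset.mem_of_mem_erase hj
        have hjm := Finset.ne_of_mem_erase hj
        rcases hd j hjS m hm hjm with h | h
        · exact h
        · exfalso
          have h1 := hmax j hjS
          have h2 := ht m hm
          linarith
      have hcard' : (S.erase m).card ≤ n := by
        have := Finset.card_erase_of_mem hm
        omega
      have hrec := ih (S.erase m) hcard' (s m) (hlo m hm)
        (fun j hj => ht j (Finset.mem_of_mem_erase hj))
        (fun j hj => hlo j (Finset.mem_of_mem_erase hj)) hother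
        (fun j hj k hk hjk => hd j (Finset.mem_of_mem_erase hj) k (Finset.mem_of_mem_erase hk) hjk)
      have hsum : ∑ j ∈ S, t j = t m + ∑ j ∈ S.erase m, t j :=
        (Finset.add_sum_erase S t hm).symm
      have := hhi m hm
      linarith

lemma sum_intervals_le (S : Finset J) (s t : J → ℝ) (ht : ∀ j ∈ S, 0 < t j)
    (a b : ℝ) (hab : a ≤ b) (hlo : ∀ j ∈ S, a ≤ s j) (hhi : ∀ j ∈ S, s j + t j ≤ b)
    (hd : ∀ j ∈ S, ∀ k ∈ S, j ≠ k → s j + t j ≤ s k ∨ s k + t k ≤ s j) :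
    ∑ j ∈ S, t j ≤ b - a :=
  sum_intervals_le_aux s t a S.card S le_rfl b hab ht hlo hhi hd

end SumIntervals


lemma makespan_set_eq (F O : Finset J) (p q : J → ℝ) (σ : J → Fin 3 → ℝ) :
    {x : ℝ | ∃ j ∈ F ∪ O, ∃ i : Fin 3, x = σ j i + jobTime F p q j} ⊆
      ↑(((F ∪ O) ×ˢ (Finset.univ : Finset (Fin 3))).image
          (fun x => σ x.1 x.2 + jobTime F p q x.1)) := by
  rintro x ⟨j, hj, i, rfl⟩
  simp only [Finset.coe_image, Set.mem_image, Finset.mem_coe, Finset.mem_product]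
  exact ⟨(j, i), ⟨hj, Finset.mem_univ i⟩, rfl⟩

lemma le_makespan (F O : Finset J) (p q : J → ℝ) (σ : J → Fin 3 → ℝ)
    (j : J) (hj : j ∈ F ∪ O) (i : Fin 3) :
    σ j i + jobTime F p q j ≤ makespan F O p q σ := by
  refine le_csSup ?_ ⟨j, hj, i, rfl⟩
  exact (Finset.bddAbove _).mono (makespan_set_eq F O p q σ)

lemma makespan_le (F O : Finset J) (p q : J → ℝ) (σ : J → Fin 3 → ℝ)
    (hF : F.Nonempty) (U : ℝ)
    (h : ∀ j ∈ F ∪ O, ∀ i : Fin 3, σ j i + jobTime F p q j ≤ U) :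
    makespan F O p q σ ≤ U := by
  refine csSup_le ?_ ?_
  · obtain ⟨j, hj⟩ := hF
    exact ⟨σ j 0 + jobTime F p q j, j, Finset.mem_union_left O hj, 0, rfl⟩
  · rintro x ⟨j, hj, i, rfl⟩
    exact h j hj i

lemma jobTime_pos (F O : Finset J) (p q : J → ℝ) (hp : ∀ j ∈ F, 0 < p j)
    (hq : ∀ j ∈ O, 0 < q j) (hdisj : Disjoint F O) :
    ∀ j ∈ F ∪ O, 0 < jobTime F p q j := by
  intro j hj
  rcases Finset.mem_union.mp hj with h | h
  · rw [jobTime, if_pos h]; exact hp j h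
  · rw [jobTime, if_neg (Finset.disjoint_right.mp hdisj h)]; exact hq j h

lemma load_bound (F O : Finset J) (p q : J → ℝ) (hdisj : Disjoint F O)
    (hp : ∀ j ∈ F, 0 < p j) (hq : ∀ j ∈ O, 0 < q j) (hF : F.Nonempty)
    (σ : J → Fin 3 → ℝ) (hfeas : Feasible F O p q σ) :
    (∑ j ∈ F, p j) + (∑ j ∈ O, q j) ≤ makespan F O p q σ := by
  classical
  set C := makespan F O p q σ with hC
  have hjt := jobTime_pos F O p q hp hq hdisj
  have hC0 : (0:ℝ) ≤ C := by
    obtain ⟨j, hj⟩ := hF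
    have h1 := le_makespan F O p q σ j (Finset.mem_union_left O hj) 0
    have h2 := hfeas.1 j (Finset.mem_union_left O hj) 0
    have h3 := hjt j (Finset.mem_union_left O hj)
    linarith
  have key := sum_intervals_le (F ∪ O) (fun j => σ j 0) (jobTime F p q)
    hjt 0 C hC0 (fun j hj => hfeas.1 j hj 0)
    (fun j hj => le_makespan F O p q σ j hj 0)
    (fun j hj k hk hjk => hfeas.2.1 0 j hj k hk hjk)
  have hsum : ∑ j ∈ F ∪ O, jobTime F p q j = (∑ j ∈ F, p j) + (∑ j ∈ O, q j) := by
    rw [Finset.sum_union hdisj]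
    congr 1
    · exact Finset.sum_congr rfl fun j hj => if_pos hj
    · exact Finset.sum_congr rfl fun j hj => if_neg (Finset.disjoint_right.mp hdisj hj)
  rw [hsum] at key
  linarith

lemma lower_bound (F O : Finset J) (p q : J → ℝ) (hdisj : Disjoint F O)
    (hp : ∀ j ∈ F, 0 < p j) (hq : ∀ j ∈ O, 0 < q j)
    (σ : J → Fin 3 → ℝ) (hfeas : Feasible F O p q σ) (pm : ℝ)
    (jstar : J) (hjF : jstar ∈ F) (hjpm : p jstar = pm) (hpmub : ∀ j ∈ F, p j ≤ pm) :
    ∃ Y ⊆ O,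
      ((∑ j ∈ F, p j) + pm + ((∑ j ∈ O, q j) - (∑ j ∈ Y, q j)) ≤ makespan F O p q σ) ∧
      ((∑ j ∈ F, p j) + pm + (∑ j ∈ Y, q j) ≤ makespan F O p q σ) ∧
      ((∑ j ∈ F, p j) + 2 * pm ≤ makespan F O p q σ) := by
  classical
  set C := makespan F O p q σ with hC
  have hjstarFO : jstar ∈ F ∪ O := Finset.mem_union_left O hjF
  have hjt := jobTime_pos F O p q hp hq hdisj
  have hjtF : ∀ j ∈ F, jobTime F p q j = p j := fun j hj => if_pos hj
  have hjtO : ∀ j ∈ O, jobTime F p q j = q j :=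
    fun j hj => if_neg (Finset.disjoint_right.mp hdisj hj)
  have hnFO : ∀ j ∈ O, j ∉ F := fun j hj => Finset.disjoint_right.mp hdisj hj
  set t1 := σ jstar 0 with ht1
  set t2 := σ jstar 1 with ht2
  set t3 := σ jstar 2 with ht3
  obtain ⟨hflow1, hflow2⟩ := hfeas.2.2.2 jstar hjF
  rw [hjpm] at hflow1 hflow2
  have hpm0 : (0:ℝ) < pm := hjpm ▸ hp jstar hjF
  have ht10 : (0:ℝ) ≤ t1 := hfeas.1 jstar hjstarFO 0
  have ht20 : (0:ℝ) ≤ t2 := hfeas.1 jstar hjstarFO 1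
  have ht30 : (0:ℝ) ≤ t3 := hfeas.1 jstar hjstarFO 2
  have hC3 : t3 + pm ≤ C := by
    have := le_makespan F O p q σ jstar hjstarFO 2
    rwa [hjtF jstar hjF, hjpm] at this
  have hC2 : t2 + pm ≤ C := by linarith
  -- partition of open jobs by M2 position relative to jstar
  set Y := O.filter (fun k => σ k 1 + q k ≤ t2) with hY
  set Z := O.filter (fun k => ¬(σ k 1 + q k ≤ t2)) with hZ
  have hYO : Y ⊆ O := Finset.filter_subset _ O
  have hZO : Z ⊆ O := Finset.filter_subset _ O
  have hYZ : (∑ j ∈ Y, q j) + (∑ j ∈ Z, q j) = ∑ j ∈ O, q j :=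
    Finset.sum_filter_add_sum_filter_not O _ q
  have hZafter : ∀ k ∈ Z, t2 + pm ≤ σ k 1 := by
    intro k hk
    obtain ⟨hkO, hknot⟩ := Finset.mem_filter.mp hk
    have hkj : k ≠ jstar := fun h => hnFO k hkO (h ▸ hjF)
    have := hfeas.2.1 1 k (Finset.mem_union_right F hkO) jstar hjstarFO hkj
    rcases this with h | h
    · rw [hjtO k hkO] at h; exact absurd h hknot
    · rwa [hjtF jstar hjF, hjpm] at h
  -- partition of other flow jobs by M2 position relative to jstar
  set E := F.erase jstar with hE
  set G := E.filter (fun k => σ k 1 + p k ≤ t2) with hG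
  set Fa := E.filter (fun k => ¬(σ k 1 + p k ≤ t2)) with hFa
  have hGE : G ⊆ E := Finset.filter_subset _ E
  have hFaE : Fa ⊆ E := Finset.filter_subset _ E
  have hEF : E ⊆ F := Finset.erase_subset jstar F
  have hGFa : (∑ j ∈ G, p j) + (∑ j ∈ Fa, p j) = ∑ j ∈ E, p j :=
    Finset.sum_filter_add_sum_filter_not E _ p
  have hPE : pm + (∑ j ∈ E, p j) = ∑ j ∈ F, p j := by
    rw [← hjpm]; exact Finset.add_sum_erase F p hjF
  have hFaafter : ∀ k ∈ Fa, t2 + pm ≤ σ k 1 := by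
    intro k hk
    obtain ⟨hkE, hknot⟩ := Finset.mem_filter.mp hk
    have hkj : k ≠ jstar := Finset.ne_of_mem_erase hkE
    have := hfeas.2.1 1 k (Finset.mem_union_left O (hEF hkE)) jstar hjstarFO hkj
    rcases this with h | h
    · rw [hjtF k (hEF hkE)] at h; exact absurd h hknot
    · rwa [hjtF jstar hjF, hjpm] at h
  -- (G2) : sum over G ∪ Y ≤ t2
  have hG2 : (∑ j ∈ G, p j) + (∑ j ∈ Y, q j) ≤ t2 := by
    have hdisjGY : Disjoint G Y :=
      hdisj.mono (hGE.trans hEF) hYO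
    have key := sum_intervals_le (G ∪ Y) (fun j => σ j 1) (jobTime F p q)
      (fun j hj => hjt j (by
        rcases Finset.mem_union.mp hj with h | h
        · exact Finset.mem_union_left O (hEF (hGE h))
        · exact Finset.mem_union_right F (hYO h)))
      0 t2 ht20
      (fun j hj => hfeas.1 j (by
        rcases Finset.mem_union.mp hj with h | h
        · exact Finset.mem_union_left O (hEF (hGE h))
        · exact Finset.mem_union_right F (hYO h)) 1)
      (fun j hj => by
        rcases Finset.mem_union.mp hj with h | h
        · rw [hjtF j (hEF (hGE h))]; exact (Finset.mem_filter.mp h).2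
        · rw [hjtO j (hYO h)]; exact (Finset.mem_filter.mp h).2)
      (fun j hj k hk hjk => hfeas.2.1 1 j (by
        rcases Finset.mem_union.mp hj with h | h
        · exact Finset.mem_union_left O (hEF (hGE h))
        · exact Finset.mem_union_right F (hYO h)) k (by
        rcases Finset.mem_union.mp hk with h | h
        · exact Finset.mem_union_left O (hEF (hGE h))
        · exact Finset.mem_union_right F (hYO h)) hjk)
    rw [Finset.sum_union hdisjGY] at key
    have e1 : ∑ j ∈ G, jobTime F p q j = ∑ j ∈ G, p j :=
      Finset.sum_congr rfl fun j hj => hjtF j (hEF (hGE hj))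
    have e2 : ∑ j ∈ Y, jobTime F p q j = ∑ j ∈ Y, q j :=
      Finset.sum_congr rfl fun j hj => hjtO j (hYO hj)
    rw [e1, e2] at key
    linarith
  -- (G2') : sum over Fa ∪ Z fits in [t2+pm, C]
  have hG2' : (∑ j ∈ Fa, p j) + (∑ j ∈ Z, q j) ≤ C - (t2 + pm) := by
    have hdisjFZ : Disjoint Fa Z := hdisj.mono (hFaE.trans hEF) hZO
    have key := sum_intervals_le (Fa ∪ Z) (fun j => σ j 1) (jobTime F p q)
      (fun j hj => hjt j (by
        rcases Finset.mem_union.mp hj with h | h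
        · exact Finset.mem_union_left O (hEF (hFaE h))
        · exact Finset.mem_union_right F (hZO h)))
      (t2 + pm) C hC2
      (fun j hj => by
        rcases Finset.mem_union.mp hj with h | h
        · exact hFaafter j h
        · exact hZafter j h)
      (fun j hj => le_makespan F O p q σ j (by
        rcases Finset.mem_union.mp hj with h | h
        · exact Finset.mem_union_left O (hEF (hFaE h))
        · exact Finset.mem_union_right F (hZO h)) 1)
      (fun j hj k hk hjk => hfeas.2.1 1 j (by
        rcases Finset.mem_union.mp hj with h | h
        · exact Finset.mem_union_left O (hEF (hFaE h))
        · exact Finset.mem_union_right F (hZO h)) k (by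
        rcases Finset.mem_union.mp hk with h | h
        · exact Finset.mem_union_left O (hEF (hFaE h))
        · exact Finset.mem_union_right F (hZO h)) hjk)
    rw [Finset.sum_union hdisjFZ] at key
    have e1 : ∑ j ∈ Fa, jobTime F p q j = ∑ j ∈ Fa, p j :=
      Finset.sum_congr rfl fun j hj => hjtF j (hEF (hFaE hj))
    have e2 : ∑ j ∈ Z, jobTime F p q j = ∑ j ∈ Z, q j :=
      Finset.sum_congr rfl fun j hj => hjtO j (hZO hj)
    rw [e1, e2] at key
    linarith
  -- (G1) : sum over G ≤ t2 - pm
  have hG1 : (∑ j ∈ G, p j) ≤ t2 - pm := by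
    set B1 := G.filter (fun k => σ k 0 + p k ≤ t1) with hB1
    set G2 := G.filter (fun k => ¬(σ k 0 + p k ≤ t1)) with hG2set
    have hB1G : B1 ⊆ G := Finset.filter_subset _ G
    have hG2G : G2 ⊆ G := Finset.filter_subset _ G
    have hsplit : (∑ j ∈ B1, p j) + (∑ j ∈ G2, p j) = ∑ j ∈ G, p j :=
      Finset.sum_filter_add_sum_filter_not G _ p
    have hGF : ∀ j ∈ G, j ∈ F := fun j hj => hEF (hGE hj)
    have hGFO : ∀ j ∈ G, j ∈ F ∪ O := fun j hj => Finset.mem_union_left O (hGF j hj)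
    have hkey1 : (∑ j ∈ B1, p j) ≤ t1 - 0 := by
      have key := sum_intervals_le B1 (fun j => σ j 0) (jobTime F p q)
        (fun j hj => hjt j (hGFO j (hB1G hj))) 0 t1 ht10
        (fun j hj => hfeas.1 j (hGFO j (hB1G hj)) 0)
        (fun j hj => by
          rw [hjtF j (hGF j (hB1G hj))]; exact (Finset.mem_filter.mp hj).2)
        (fun j hj k hk hjk => hfeas.2.1 0 j (hGFO j (hB1G hj)) k (hGFO k (hB1G hk)) hjk)
      have e1 : ∑ j ∈ B1, jobTime F p q j = ∑ j ∈ B1, p j :=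
        Finset.sum_congr rfl fun j hj => hjtF j (hGF j (hB1G hj))
      rw [e1] at key; exact key
    have hG2after : ∀ k ∈ G2, t1 + pm ≤ σ k 1 := by
      intro k hk
      obtain ⟨hkG, hknot⟩ := Finset.mem_filter.mp hk
      have hkj : k ≠ jstar := Finset.ne_of_mem_erase (hGE hkG)
      have := hfeas.2.1 0 k (hGFO k hkG) jstar hjstarFO hkj
      rcases this with h | h
      · rw [hjtF k (hGF k hkG)] at h; exact absurd h hknot
      · rw [hjtF jstar hjF, hjpm] at h
        have hflowk := (hfeas.2.2.2 k (hGF k hkG)).1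
        have := (hp k (hGF k hkG)).le
        linarith
    have hkey2 : (∑ j ∈ G2, p j) ≤ t2 - (t1 + pm) := by
      have key := sum_intervals_le G2 (fun j => σ j 1) (jobTime F p q)
        (fun j hj => hjt j (hGFO j (hG2G hj))) (t1 + pm) t2 (by linarith)
        (fun j hj => hG2after j hj)
        (fun j hj => by
          rw [hjtF j (hGF j (hG2G hj))]
          exact (Finset.mem_filter.mp (hG2G hj)).2)
        (fun j hj k hk hjk => hfeas.2.1 1 j (hGFO j (hG2G hj)) k (hGFO k (hG2G hk)) hjk)
      have e1 : ∑ j ∈ G2, jobTime F p q j = ∑ j ∈ G2, p j :=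
        Finset.sum_congr rfl fun j hj => hjtF j (hGF j (hG2G hj))
      rw [e1] at key; exact key
    linarith
  -- (G1') : sum over Fa ≤ C - t2 - 2pm
  have hG1' : (∑ j ∈ Fa, p j) ≤ C - t2 - 2 * pm := by
    set A3 := Fa.filter (fun k => ¬(σ k 2 + p k ≤ t3)) with hA3
    set Mid := Fa.filter (fun k => σ k 2 + p k ≤ t3) with hMid
    have hA3F : A3 ⊆ Fa := Finset.filter_subset _ Fa
    have hMidF : Mid ⊆ Fa := Finset.filter_subset _ Fa
    have hsplit : (∑ j ∈ Mid, p j) + (∑ j ∈ A3, p j) = ∑ j ∈ Fa, p j :=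
      Finset.sum_filter_add_sum_filter_not Fa _ p
    have hFaF : ∀ j ∈ Fa, j ∈ F := fun j hj => hEF (hFaE hj)
    have hFaFO : ∀ j ∈ Fa, j ∈ F ∪ O := fun j hj => Finset.mem_union_left O (hFaF j hj)
    have hA3after : ∀ k ∈ A3, t3 + pm ≤ σ k 2 := by
      intro k hk
      obtain ⟨hkFa, hknot⟩ := Finset.mem_filter.mp hk
      have hkj : k ≠ jstar := Finset.ne_of_mem_erase (hFaE hkFa)
      have := hfeas.2.1 2 k (hFaFO k hkFa) jstar hjstarFO hkj
      rcases this with h | h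
      · rw [hjtF k (hFaF k hkFa)] at h; exact absurd h hknot
      · rwa [hjtF jstar hjF, hjpm] at h
    have hkey1 : (∑ j ∈ A3, p j) ≤ C - (t3 + pm) := by
      have key := sum_intervals_le A3 (fun j => σ j 2) (jobTime F p q)
        (fun j hj => hjt j (hFaFO j (hA3F hj))) (t3 + pm) C hC3
        (fun j hj => hA3after j hj)
        (fun j hj => le_makespan F O p q σ j (hFaFO j (hA3F hj)) 2)
        (fun j hj k hk hjk => hfeas.2.1 2 j (hFaFO j (hA3F hj)) k (hFaFO k (hA3F hk)) hjk)
      have e1 : ∑ j ∈ A3, jobTime F p q j = ∑ j ∈ A3, p j :=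
        Finset.sum_congr rfl fun j hj => hjtF j (hFaF j (hA3F hj))
      rw [e1] at key; exact key
    have hkey2 : (∑ j ∈ Mid, p j) ≤ t3 - (t2 + pm) := by
      have key := sum_intervals_le Mid (fun j => σ j 1) (jobTime F p q)
        (fun j hj => hjt j (hFaFO j (hMidF hj))) (t2 + pm) t3 (by linarith)
        (fun j hj => hFaafter j (hMidF hj))
        (fun j hj => by
          rw [hjtF j (hFaF j (hMidF hj))]
          have hmem := Finset.mem_filter.mp hj
          have hflowj := (hfeas.2.2.2 j (hFaF j (hMidF hj))).2
          have := (hp j (hFaF j (hMidF hj))).le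
          linarith [hmem.2])
        (fun j hj k hk hjk => hfeas.2.1 1 j (hFaFO j (hMidF hj)) k (hFaFO k (hMidF hk)) hjk)
      have e1 : ∑ j ∈ Mid, jobTime F p q j = ∑ j ∈ Mid, p j :=
        Finset.sum_congr rfl fun j hj => hjtF j (hFaF j (hMidF hj))
      rw [e1] at key; exact key
    linarith
  exact ⟨Y, hYO, by linarith, by linarith, by linarith⟩

lemma construction (F O X : Finset J) (p q : J → ℝ) (hdisj : Disjoint F O)
    (hp : ∀ j ∈ F, 0 < p j) (hq : ∀ j ∈ O, 0 < q j) (hF : F.Nonempty) (hX : X ⊆ O)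
    (pm qm : ℝ) (hpm : ∀ j ∈ F, p j ≤ pm) (hqm : ∀ j ∈ O, q j ≤ qm)
    (hqmpm : qm ≤ pm) (hpmP : pm ≤ ∑ j ∈ F, p j) (hqm0 : 0 ≤ qm) :
    ∃ π : J → Fin 3 → ℝ, Feasible F O p q π ∧
      makespan F O p q π ≤
        max (max ((∑ j ∈ F, p j) + ∑ j ∈ O \ X, q j) (max (∑ j ∈ O \ X, q j) qm + qm)
              + ∑ j ∈ X, q j)
          (max (max (∑ j ∈ X, q j) pm + (∑ j ∈ F, p j) + ∑ j ∈ O \ X, q j)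
            (max (max (∑ j ∈ X, q j) pm + pm) (max (∑ j ∈ O \ X, q j) qm + ∑ j ∈ X, q j)
              + ∑ j ∈ F, p j)) := by
  classical
  set P := ∑ j ∈ F, p j with hPdef
  set QX := ∑ j ∈ X, q j with hQXdef
  set QY := ∑ j ∈ O \ X, q j with hQYdef
  set δ2 := max QX pm with hδ2def
  set β := max QY qm with hβdef
  set γ := max (P + QY) (β + qm) with hγdef
  set δ3 := max (δ2 + pm) (β + QX) with hδ3def
  have hpm0 : 0 ≤ pm := hqm0.trans hqmpm
  have hP0 : 0 ≤ P := Finset.sum_nonneg fun j hj => (hp j hj).le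
  have hQX0 : 0 ≤ QX := Finset.sum_nonneg fun j hj => (hq j (hX hj)).le
  have hQY0 : 0 ≤ QY := Finset.sum_nonneg fun j hj => (hq j (Finset.mem_sdiff.mp hj).1).le
  have hQXδ2 : QX ≤ δ2 := le_max_left _ _
  have hpmδ2 : pm ≤ δ2 := le_max_right _ _
  have hQYβ : QY ≤ β := le_max_left _ _
  have hqmβ : qm ≤ β := le_max_right _ _
  have hβ0 : 0 ≤ β := hqm0.trans hqmβ
  have hδ20 : 0 ≤ δ2 := hpm0.trans hpmδ2
  have hPQYγ : P + QY ≤ γ := le_max_left _ _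
  have hβqmγ : β + qm ≤ γ := le_max_right _ _
  have hγ0 : 0 ≤ γ := by have := hβqmγ; linarith
  have hδ2pmδ3 : δ2 + pm ≤ δ3 := le_max_left _ _
  have hβQXδ3 : β + QX ≤ δ3 := le_max_right _ _
  have hδ30 : 0 ≤ δ3 := by have := hδ2pmδ3; linarith
  have hδ2δ3 : δ2 ≤ δ3 := by linarith
  -- lists
  set LF := F.toList with hLF
  set LX := X.toList with hLX
  set LY := (O \ X).toList with hLY
  set bF := lstart p LF with hbF
  set bX := lstart q LX with hbX
  set bY := lstart q LY with hbY
  have hwF : ∀ x ∈ LF, 0 ≤ p x := fun x hx => (hp x (Finset.mem_toList.mp hx)).le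
  have hwX : ∀ x ∈ LX, 0 ≤ q x := fun x hx => (hq x (hX (Finset.mem_toList.mp hx))).le
  have hwY : ∀ x ∈ LY, 0 ≤ q x :=
    fun x hx => (hq x (Finset.mem_sdiff.mp (Finset.mem_toList.mp hx)).1).le
  have hsF : (LF.map p).sum = P := Finset.sum_map_toList F p
  have hsX : (LX.map q).sum = QX := Finset.sum_map_toList X q
  have hsY : (LY.map q).sum = QY := Finset.sum_map_toList (O \ X) q
  -- block facts
  have hbF0 : ∀ j ∈ F, 0 ≤ bF j := fun j _ => lstart_nonneg p LF j hwF
  have hbFP : ∀ j ∈ F, bF j + p j ≤ P := fun j hj => by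
    have := lstart_add_le p LF j hwF (Finset.mem_toList.mpr hj); rwa [hsF] at this
  have hdF : ∀ j ∈ F, ∀ k ∈ F, j ≠ k → bF j + p j ≤ bF k ∨ bF k + p k ≤ bF j :=
    fun j hj k hk hjk => lstart_disj p LF j k hwF (Finset.nodup_toList F)
      (Finset.mem_toList.mpr hj) (Finset.mem_toList.mpr hk) hjk
  have hbX0 : ∀ j ∈ X, 0 ≤ bX j := fun j _ => lstart_nonneg q LX j hwX
  have hbXQ : ∀ j ∈ X, bX j + q j ≤ QX := fun j hj => by
    have := lstart_add_le q LX j hwX (Finset.mem_toList.mpr hj); rwa [hsX] at this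
  have hdX : ∀ j ∈ X, ∀ k ∈ X, j ≠ k → bX j + q j ≤ bX k ∨ bX k + q k ≤ bX j :=
    fun j hj k hk hjk => lstart_disj q LX j k hwX (Finset.nodup_toList X)
      (Finset.mem_toList.mpr hj) (Finset.mem_toList.mpr hk) hjk
  have hbY0 : ∀ j ∈ O \ X, 0 ≤ bY j := fun j _ => lstart_nonneg q LY j hwY
  have hbYQ : ∀ j ∈ O \ X, bY j + q j ≤ QY := fun j hj => by
    have := lstart_add_le q LY j hwY (Finset.mem_toList.mpr hj); rwa [hsY] at this
  have hdY : ∀ j ∈ O \ X, ∀ k ∈ O \ X, j ≠ k → bY j + q j ≤ bY k ∨ bY k + q k ≤ bY j :=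
    fun j hj k hk hjk => lstart_disj q LY j k hwY (Finset.nodup_toList (O \ X))
      (Finset.mem_toList.mpr hj) (Finset.mem_toList.mpr hk) hjk
  -- the schedule
  set π : J → Fin 3 → ℝ := fun j =>
    if j ∈ F then ![bF j, δ2 + bF j, δ3 + bF j]
    else if j ∈ X then ![γ + bX j, bX j, β + bX j]
    else if j ∈ O then ![P + bY j, δ2 + P + bY j, bY j]
    else ![0, 0, 0] with hπdef
  have hnF : ∀ j ∈ O, j ∉ F := fun j hj => Finset.disjoint_right.mp hdisj hj
  have hjtF : ∀ j ∈ F, jobTime F p q j = p j := fun j hj => if_pos hj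
  have hjtO : ∀ j ∈ O, jobTime F p q j = q j := fun j hj => if_neg (hnF j hj)
  have hvF : ∀ j ∈ F, π j = ![bF j, δ2 + bF j, δ3 + bF j] := by
    intro j hj; simp [hπdef, hj]
  have hvX : ∀ j ∈ X, π j = ![γ + bX j, bX j, β + bX j] := by
    intro j hj
    have h1 : j ∉ F := hnF j (hX hj)
    simp [hπdef, h1, hj]
  have hvY : ∀ j ∈ O \ X, π j = ![P + bY j, δ2 + P + bY j, bY j] := by
    intro j hj
    obtain ⟨hjO, hjX⟩ := Finset.mem_sdiff.mp hj
    have h1 : j ∉ F := hnF j hjO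
    simp [hπdef, h1, hjX, hjO]
  have classify : ∀ j ∈ F ∪ O, j ∈ F ∨ j ∈ X ∨ j ∈ O \ X := by
    intro j hj
    rcases Finset.mem_union.mp hj with h | h
    · exact Or.inl h
    · by_cases hx : j ∈ X
      · exact Or.inr (Or.inl hx)
      · exact Or.inr (Or.inr (Finset.mem_sdiff.mpr ⟨h, hx⟩))
  have hqY : ∀ j ∈ O \ X, 0 < q j := fun j hj => hq j (Finset.mem_sdiff.mp hj).1
  have hqmY : ∀ j ∈ O \ X, q j ≤ qm := fun j hj => hqm j (Finset.mem_sdiff.mp hj).1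
  have hjtY : ∀ j ∈ O \ X, jobTime F p q j = q j := fun j hj => hjtO j (Finset.mem_sdiff.mp hj).1
  have hjtX : ∀ j ∈ X, jobTime F p q j = q j := fun j hj => hjtO j (hX hj)
  have hqmX : ∀ j ∈ X, q j ≤ qm := fun j hj => hqm j (hX hj)
  refine ⟨π, ⟨?_, ?_, ?_, ?_⟩, ?_⟩
  · -- nonneg
    intro j hj i
    rcases classify j hj with h | h | h
    · rw [hvF j h]
      fin_cases i <;> simp <;> linarith [hbF0 j h]
    · rw [hvX j h]
      fin_cases i <;> simp <;> linarith [hbX0 j h]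
    · rw [hvY j h]
      fin_cases i <;> simp <;> linarith [hbY0 j h]
  · -- machine disjointness
    intro i j hj k hk hjk
    rcases classify j hj with hj1 | hj1 | hj1 <;> rcases classify k hk with hk1 | hk1 | hk1
    · -- F F
      rw [hvF j hj1, hvF k hk1, hjtF j hj1, hjtF k hk1]
      rcases hdF j hj1 k hk1 hjk with h | h
      · left; fin_cases i <;> simp <;> linarith
      · right; fin_cases i <;> simp <;> linarith
    · -- F X
      rw [hvF j hj1, hvX k hk1, hjtF j hj1, hjtX k hk1]
      fin_cases i <;> simp <;>
        first
        | (left; linarith [hbFP j hj1, hbF0 j hj1, hbX0 k hk1, hbXQ k hk1])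
        | (right; linarith [hbFP j hj1, hbF0 j hj1, hbX0 k hk1, hbXQ k hk1])
    · -- F Y
      rw [hvF j hj1, hvY k hk1, hjtF j hj1, hjtY k hk1]
      fin_cases i <;> simp <;>
        first
        | (left; linarith [hbFP j hj1, hbF0 j hj1, hbY0 k hk1, hbYQ k hk1])
        | (right; linarith [hbFP j hj1, hbF0 j hj1, hbY0 k hk1, hbYQ k hk1])
    · -- X F
      rw [hvX j hj1, hvF k hk1, hjtX j hj1, hjtF k hk1]
      fin_cases i <;> simp <;>
        first
        | (left; linarith [hbXQ j hj1, hbX0 j hj1, hbF0 k hk1, hbFP k hk1])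
        | (right; linarith [hbXQ j hj1, hbX0 j hj1, hbF0 k hk1, hbFP k hk1])
    · -- X X
      rw [hvX j hj1, hvX k hk1, hjtX j hj1, hjtX k hk1]
      rcases hdX j hj1 k hk1 hjk with h | h
      · left; fin_cases i <;> simp <;> linarith
      · right; fin_cases i <;> simp <;> linarith
    · -- X Y
      rw [hvX j hj1, hvY k hk1, hjtX j hj1, hjtY k hk1]
      fin_cases i <;> simp <;>
        first
        | (left; linarith [hbXQ j hj1, hbX0 j hj1, hbY0 k hk1, hbYQ k hk1])
        | (right; linarith [hbXQ j hj1, hbX0 j hj1, hbY0 k hk1, hbYQ k hk1])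
    · -- Y F
      rw [hvY j hj1, hvF k hk1, hjtY j hj1, hjtF k hk1]
      fin_cases i <;> simp <;>
        first
        | (left; linarith [hbYQ j hj1, hbY0 j hj1, hbF0 k hk1, hbFP k hk1])
        | (right; linarith [hbYQ j hj1, hbY0 j hj1, hbF0 k hk1, hbFP k hk1])
    · -- Y X
      rw [hvY j hj1, hvX k hk1, hjtY j hj1, hjtX k hk1]
      fin_cases i <;> simp <;>
        first
        | (left; linarith [hbYQ j hj1, hbY0 j hj1, hbX0 k hk1, hbXQ k hk1])
        | (right; linarith [hbYQ j hj1, hbY0 j hj1, hbX0 k hk1, hbXQ k hk1])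
    · -- Y Y
      rw [hvY j hj1, hvY k hk1, hjtY j hj1, hjtY k hk1]
      rcases hdY j hj1 k hk1 hjk with h | h
      · left; fin_cases i <;> simp <;> linarith
      · right; fin_cases i <;> simp <;> linarith
  · -- per-job disjointness
    intro j hj i i' hii'
    rcases classify j hj with h | h | h
    · rw [hvF j h, hjtF j h]
      fin_cases i <;> fin_cases i' <;>
        first
        | (exact absurd rfl hii')
        | (left; simp; linarith [hpm j h, (hp j h).le])
        | (right; simp; linarith [hpm j h, (hp j h).le])
    · rw [hvX j h, hjtX j h]
      fin_cases i <;> fin_cases i' <;>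
        first
        | (exact absurd rfl hii')
        | (left; simp; linarith [hqmX j h, (hq j (hX h)).le])
        | (right; simp; linarith [hqmX j h, (hq j (hX h)).le])
    · rw [hvY j h, hjtY j h]
      fin_cases i <;> fin_cases i' <;>
        first
        | (exact absurd rfl hii')
        | (left; simp; linarith [hqmY j h, (hqY j h).le])
        | (right; simp; linarith [hqmY j h, (hqY j h).le])
  · -- flow order
    intro j hj
    rw [hvF j hj]
    constructor <;> simp <;> linarith [hpm j hj]
  · -- makespan bound
    have hU1 : γ + QX ≤ max (γ + QX) (max (δ2 + P + QY) (δ3 + P)) := le_max_left _ _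
    have hU2 : δ2 + P + QY ≤ max (γ + QX) (max (δ2 + P + QY) (δ3 + P)) :=
      le_trans (le_max_left _ _) (le_max_right _ _)
    have hU3 : δ3 + P ≤ max (γ + QX) (max (δ2 + P + QY) (δ3 + P)) :=
      le_trans (le_max_right _ _) (le_max_right _ _)
    apply makespan_le F O p q π hF
    intro j hj i
    rcases classify j hj with h | h | h
    · rw [hvF j h, hjtF j h]
      fin_cases i <;> simp <;>
        first
        | (left; linarith [hbFP j h])
        | (right; left; linarith [hbFP j h])
        | (right; right; linarith [hbFP j h])
    · rw [hvX j h, hjtX j h]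
      fin_cases i <;> simp <;>
        first
        | (left; linarith [hbXQ j h])
        | (right; left; linarith [hbXQ j h])
        | (right; right; linarith [hbXQ j h])
    · rw [hvY j h, hjtY j h]
      fin_cases i <;> simp <;>
        first
        | (left; linarith [hbYQ j h])
        | (right; left; linarith [hbYQ j h])
        | (right; right; linarith [hbYQ j h])

end Helpers

/-- Lemma 3.5 (together with Lemma 3.1): if `p_max ≥ q_max`, `Q(O) > p_max`, `ε > 0`,
`A ⊆ O` is a `(1+ε)`-approximate Min-Knapsack solution with `Q(O \ A) ≤ p_max − ε·OPT1`,
and `B ⊆ O` is a `(1−ε)`-approximate Max-Knapsack solution, then there is a feasible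
schedule whose makespan is within a factor `1 + ε` of the optimum. -/
theorem stmt6 {J : Type*} [DecidableEq J] (F O : Finset J) (p q : J → ℝ)
    (hdisj : Disjoint F O)
    (hp : ∀ j ∈ F, 0 < p j) (hq : ∀ j ∈ O, 0 < q j)
    (hF : F.Nonempty) (hO : O.Nonempty)
    (hpq : O.sup' hO q ≤ F.sup' hF p)
    (hQO : F.sup' hF p < ∑ j ∈ O, q j)
    (OPT1 OPT2 : ℝ)
    (hOPT1 : IsLeast {x : ℝ | ∃ X ⊆ O, x = (∑ j ∈ X, q j) ∧ F.sup' hF p < x} OPT1)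
    (hOPT2 : IsGreatest {x : ℝ | ∃ Y ⊆ O, x = (∑ j ∈ Y, q j) ∧ x ≤ F.sup' hF p} OPT2)
    (ε : ℝ) (hε : 0 < ε)
    (A : Finset J) (hAO : A ⊆ O)
    (hA0 : F.sup' hF p < ∑ j ∈ A, q j)
    (hA1 : (∑ j ∈ A, q j) ≤ (1 + ε) * OPT1)
    (hA2 : (∑ j ∈ O \ A, q j) ≤ F.sup' hF p - ε * OPT1)
    (B : Finset J) (hBO : B ⊆ O)
    (hB1 : (∑ j ∈ B, q j) ≤ F.sup' hF p)
    (hB2 : (1 - ε) * OPT2 ≤ ∑ j ∈ B, q j) :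
    ∃ π : J → Fin 3 → ℝ, Feasible F O p q π ∧
      ∀ σ : J → Fin 3 → ℝ, Feasible F O p q σ →
        makespan F O p q π < (1 + ε) * makespan F O p q σ := by
  classical
  set pm := F.sup' hF p with hpmdef
  set qm := O.sup' hO q with hqmdef
  obtain ⟨jstar, hjF, hjeq⟩ := Finset.exists_mem_eq_sup' hF p
  rw [← hpmdef] at hjeq
  have hpmub : ∀ j ∈ F, p j ≤ pm := fun j hj => Finset.le_sup' p hj
  have hqmub : ∀ j ∈ O, q j ≤ qm := fun j hj => Finset.le_sup' q hj
  have hpm0 : (0:ℝ) < pm := by rw [hjeq]; exact hp jstar hjF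
  have hqm0 : (0:ℝ) < qm := by
    obtain ⟨j0, hj0⟩ := hO
    exact lt_of_lt_of_le (hq j0 hj0) (hqmub j0 hj0)
  have hpmP : pm ≤ ∑ j ∈ F, p j := by
    rw [hjeq]; exact Finset.single_le_sum (fun j hj => (hp j hj).le) hjF
  set P := ∑ j ∈ F, p j with hPdef
  set Q := ∑ j ∈ O, q j with hQdef
  have hP0 : (0:ℝ) < P := Finset.sum_pos hp hF
  obtain ⟨⟨X1, hX1O, hOPT1eq, hOPT1gt⟩, hOPT1lb⟩ := hOPT1
  obtain ⟨⟨Y2, hY2O, hOPT2eq, hOPT2le⟩, hOPT2ub⟩ := hOPT2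
  have hOPT1Q : OPT1 ≤ Q := hOPT1lb ⟨O, Finset.Subset.refl O, rfl, hQO⟩
  have hOPT20 : (0:ℝ) ≤ OPT2 :=
    hOPT2ub ⟨∅, Finset.empty_subset O, by simp, by simp [hpm0.le]⟩
  have hOPT10 : (0:ℝ) < OPT1 := lt_trans hpm0 hOPT1gt
  have hεO1 : 0 ≤ ε * OPT1 := le_of_lt (mul_pos hε hOPT10)
  have hQA1 : ∑ j ∈ A, q j ≤ OPT1 + ε * OPT1 := by nlinarith [hA1]
  have hQB1 : Q - ∑ j ∈ B, q j ≤ (Q - OPT2) + ε * OPT1 := by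
    have h2 : ε * OPT2 ≤ ε * OPT1 :=
      mul_le_mul_of_nonneg_left (by linarith [hOPT1gt, hOPT2le]) hε.le
    nlinarith [hB2]
  set m := min OPT1 (Q - OPT2) with hmdef
  -- common part of the two cases
  have main : ∀ π : J → Fin 3 → ℝ, Feasible F O p q π →
      (∀ σ : J → Fin 3 → ℝ, Feasible F O p q σ →
        makespan F O p q π ≤ makespan F O p q σ + ε * OPT1) →
      ∃ π' : J → Fin 3 → ℝ, Feasible F O p q π' ∧
      ∀ σ : J → Fin 3 → ℝ, Feasible F O p q σ →
        makespan F O p q π' < (1 + ε) * makespan F O p q σ := by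
    intro π hfeasπ hbound
    refine ⟨π, hfeasπ, ?_⟩
    intro σ hσ
    have hLB1 := load_bound F O p q hdisj hp hq hF σ hσ
    have hC1 : OPT1 < makespan F O p q σ := by
      linarith
    have hεlt : ε * OPT1 < ε * makespan F O p q σ :=
      mul_lt_mul_of_pos_left hC1 hε
    have := hbound σ hσ
    nlinarith
  -- min bound for any feasible schedule
  have hminC : ∀ σ : J → Fin 3 → ℝ, Feasible F O p q σ →
      P + pm + m ≤ makespan F O p q σ ∧ P + 2 * pm ≤ makespan F O p q σ ∧
      P + Q ≤ makespan F O p q σ := by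
    intro σ hσ
    have hLB1 := load_bound F O p q hdisj hp hq hF σ hσ
    obtain ⟨Ys, hYsO, hl1, hl2, hl3⟩ :=
      lower_bound F O p q hdisj hp hq σ hσ pm jstar hjF hjeq.symm hpmub
    refine ⟨?_, hl3, hLB1⟩
    by_cases hYs : (∑ j ∈ Ys, q j) ≤ pm
    · have h1 : ∑ j ∈ Ys, q j ≤ OPT2 := hOPT2ub ⟨Ys, hYsO, rfl, hYs⟩
      have h2 : m ≤ Q - OPT2 := min_le_right _ _
      linarith
    · have h1 : OPT1 ≤ ∑ j ∈ Ys, q j := hOPT1lb ⟨Ys, hYsO, rfl, not_le.mp hYs⟩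
      have h2 : m ≤ OPT1 := min_le_left _ _
      linarith
  by_cases hAB : (∑ j ∈ A, q j) ≤ Q - (∑ j ∈ B, q j)
  · -- use X = A
    have hQAm : ∑ j ∈ A, q j ≤ m + ε * OPT1 := by
      have h1 : ∑ j ∈ A, q j ≤ (Q - OPT2) + ε * OPT1 := le_trans hAB hQB1
      have := le_min hQA1 h1
      calc ∑ j ∈ A, q j ≤ min (OPT1 + ε * OPT1) ((Q - OPT2) + ε * OPT1) := this
        _ = m + ε * OPT1 := by rw [hmdef, ← min_add_add_right]
    obtain ⟨π, hfeasπ, hmk⟩ := construction F O A p q hdisj hp hq hF hAO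
      pm qm hpmub hqmub hpq hpmP hqm0.le
    have hQY' : ∑ j ∈ O \ A, q j = Q - ∑ j ∈ A, q j := by
      rw [hQdef]; exact Finset.sum_sdiff_eq_sub hAO
    set QA := ∑ j ∈ A, q j with hQAdef
    set QY := ∑ j ∈ O \ A, q j with hQYdef
    have hQYpm : QY ≤ pm := by
      have := hA2
      linarith
    refine main π hfeasπ ?_
    · intro σ hσ
      obtain ⟨hc1, hc2, hc3⟩ := hminC σ hσ
      refine le_trans hmk ?_
      have hqmpm : qm ≤ pm := hpq
      have h1 : max QY qm ≤ pm := max_le hQYpm hqmpm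
      have h2 : max QA pm ≤ QA := max_le le_rfl (le_of_lt hA0)
      have hQQ : QA + QY = Q := by rw [hQY']; ring
      apply max_le
      · have h3 : max (P + QY) (max QY qm + qm) ≤ makespan F O p q σ + ε * OPT1 - QA := by
          apply max_le
          · linarith
          · linarith [hQAm, hpmP, hc1]
        linarith
      · apply max_le
        · linarith
        · have h4 : max (max QA pm + pm) (max QY qm + QA) ≤
              makespan F O p q σ + ε * OPT1 - P := by
            apply max_le
            · linarith [hQAm, hc1]
            · linarith [hQAm, hc1]
          linarith
  · -- use X = B
    have hQBm : Q - ∑ j ∈ B, q j ≤ m + ε * OPT1 := by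
      have h1 : Q - ∑ j ∈ B, q j ≤ OPT1 + ε * OPT1 :=
        le_trans (le_of_lt (not_le.mp hAB)) hQA1
      have := le_min h1 hQB1
      calc Q - ∑ j ∈ B, q j ≤ min (OPT1 + ε * OPT1) ((Q - OPT2) + ε * OPT1) := this
        _ = m + ε * OPT1 := by rw [hmdef, ← min_add_add_right]
    obtain ⟨π, hfeasπ, hmk⟩ := construction F O B p q hdisj hp hq hF hBO
      pm qm hpmub hqmub hpq hpmP hqm0.le
    have hQY' : ∑ j ∈ O \ B, q j = Q - ∑ j ∈ B, q j := by
      rw [hQdef]; exact Finset.sum_sdiff_eq_sub hBO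
    set QB := ∑ j ∈ B, q j with hQBdef
    set QY := ∑ j ∈ O \ B, q j with hQYdef
    refine main π hfeasπ ?_
    · intro σ hσ
      obtain ⟨hc1, hc2, hc3⟩ := hminC σ hσ
      refine le_trans hmk ?_
      have hqmpm : qm ≤ pm := hpq
      have h2 : max QB pm ≤ pm := max_le hB1 le_rfl
      have hQQ : QB + QY = Q := by rw [hQY']; ring
      have hQB0 : 0 ≤ QB := Finset.sum_nonneg fun j hj => (hq j (hBO hj)).le
      set C := makespan F O p q σ with hCdef
      apply max_le
      · have h3 : max (P + QY) (max QY qm + qm) ≤ C + ε * OPT1 - QB := by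
          apply max_le
          · linarith
          · have h5 : max QY qm ≤ C + ε * OPT1 - QB - qm := by
              apply max_le
              · linarith [hpmP]
              · linarith [hpmP]
            linarith
        linarith
      · apply max_le
        · -- max QB pm + P + QY ≤ C + ε OPT1
          linarith [hQBm, hc1, min_le_right OPT1 (Q - OPT2)]
        · have h4 : max (max QB pm + pm) (max QY qm + QB) ≤ C + ε * OPT1 - P := by
            apply max_le
            · linarith
            · have h5 : max QY qm ≤ C + ε * OPT1 - P - QB := by
                apply max_le
                · linarith
                · linarith [hpmP]
              linarith
          linarith
end
end

section
/- Suppose F is nonempty, p_max ≥ q_max, Q(O) > p_max and ε > 0. Suppose A ⊆ O satisfies p_max < Q(A) ≤ (1+ε)·OPT1 and p_max − ε·OPT1 < Q(O \ A) < p_max. Then there exists a feasible schedule π (with makespan P(F) + Q(O) + p_max − Q(O \ A)) such that makespan(π) < (1+ε)·makespan(σ) for every feasible schedule σ. -/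
open Finset

noncomputable section

section Aux
variable {J : Type*} [DecidableEq J] [LinearOrder J]

/-- Cumulative processing time of the jobs of `s` scheduled before `j`. -/
def prevS (s : Finset J) (t : J → ℝ) (j : J) : ℝ :=
  ∑ k ∈ s.filter (fun k => k < j), t k

lemma prevS_nonneg {s : Finset J} {t : J → ℝ} (ht : ∀ k ∈ s, 0 ≤ t k) (j : J) :
    0 ≤ prevS s t j :=
  Finset.sum_nonneg fun k hk => ht k (Finset.mem_filter.1 hk).1

lemma prevS_add_le {s : Finset J} {t : J → ℝ} (ht : ∀ k ∈ s, 0 ≤ t k) {j : J}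
    (hj : j ∈ s) : prevS s t j + t j ≤ ∑ k ∈ s, t k := by
  have hsub : insert j (s.filter (fun k => k < j)) ⊆ s := by
    intro k hk
    rcases Finset.mem_insert.1 hk with h | h
    · exact h ▸ hj
    · exact (Finset.mem_filter.1 h).1
  have hnot : j ∉ s.filter (fun k => k < j) := by
    simp [Finset.mem_filter]
  calc prevS s t j + t j = ∑ k ∈ insert j (s.filter (fun k => k < j)), t k := by
        rw [Finset.sum_insert hnot, prevS]; ring
    _ ≤ ∑ k ∈ s, t k :=
        Finset.sum_le_sum_of_subset_of_nonneg hsub (fun k hk _ => ht k hk)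

lemma prevS_chain {s : Finset J} {t : J → ℝ} (ht : ∀ k ∈ s, 0 ≤ t k) {j k : J}
    (hj : j ∈ s) (hjk : j < k) : prevS s t j + t j ≤ prevS s t k := by
  have hsub : insert j (s.filter (fun m => m < j)) ⊆ s.filter (fun m => m < k) := by
    intro m hm
    rcases Finset.mem_insert.1 hm with h | h
    · subst h; exact Finset.mem_filter.2 ⟨hj, hjk⟩
    · rcases Finset.mem_filter.1 h with ⟨h1, h2⟩
      exact Finset.mem_filter.2 ⟨h1, h2.trans hjk⟩
  have hnot : j ∉ s.filter (fun m => m < j) := by simp [Finset.mem_filter]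
  calc prevS s t j + t j = ∑ m ∈ insert j (s.filter (fun m => m < j)), t m := by
        rw [Finset.sum_insert hnot, prevS]; ring
    _ ≤ prevS s t k :=
        Finset.sum_le_sum_of_subset_of_nonneg hsub
          (fun m hm _ => ht m (Finset.mem_filter.1 hm).1)

lemma prevS_max {s : Finset J} {t : J → ℝ} (hs : s.Nonempty) :
    prevS s t (s.max' hs) + t (s.max' hs) = ∑ k ∈ s, t k := by
  have hfil : s.filter (fun k => k < s.max' hs) = s.erase (s.max' hs) := by
    ext k
    simp only [Finset.mem_filter, Finset.mem_erase]
    constructor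
    · rintro ⟨h1, h2⟩; exact ⟨ne_of_lt h2, h1⟩
    · rintro ⟨h1, h2⟩; exact ⟨h2, lt_of_le_of_ne (Finset.le_max' s k h2) h1⟩
  rw [prevS, hfil, Finset.sum_erase_add _ _ (s.max'_mem hs)]

end Aux

/-- If positive-length intervals on a machine are pairwise disjoint and start
nonnegatively, some job completes no earlier than the total processing time. -/
lemma exists_late {J : Type*} [DecidableEq J] (s : Finset J) (hs : s.Nonempty)
    (t : J → ℝ) (ht : ∀ j ∈ s, 0 < t j) (S : J → ℝ) (hS : ∀ j ∈ s, 0 ≤ S j)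
    (hd : ∀ j ∈ s, ∀ k ∈ s, j ≠ k → S j + t j ≤ S k ∨ S k + t k ≤ S j) :
    ∃ j ∈ s, (∑ k ∈ s, t k) ≤ S j + t j := by
  classical
  induction s using Finset.strongInduction with
  | _ s ih =>
    obtain ⟨j, hj, hjmax⟩ := s.exists_max_image S hs
    refine ⟨j, hj, ?_⟩
    by_cases hcard : s.erase j = ∅
    · have : s = {j} := by
        apply Finset.eq_singleton_iff_unique_mem.2
        exact ⟨hj, fun k hk => by
          by_contra hne
          exact absurd (Finset.mem_erase.2 ⟨hne, hk⟩) (by simp [hcard])⟩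
      rw [this, Finset.sum_singleton]
      linarith [hS j hj]
    · have hne : (s.erase j).Nonempty := Finset.nonempty_of_ne_empty hcard
      have hsub : s.erase j ⊂ s := Finset.erase_ssubset hj
      obtain ⟨k, hk, hkbig⟩ := ih (s.erase j) hsub hne
        (fun m hm => ht m (Finset.mem_of_mem_erase hm))
        (fun m hm => hS m (Finset.mem_of_mem_erase hm))
        (fun m hm n hn hmn => hd m (Finset.mem_of_mem_erase hm) n
          (Finset.mem_of_mem_erase hn) hmn)
      have hkm : k ∈ s := Finset.mem_of_mem_erase hk
      have hknej : k ≠ j := (Finset.mem_erase.1 hk).1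
      have : S k + t k ≤ S j := by
        rcases hd j hj k hkm (Ne.symm hknej) with h | h
        · exfalso
          have := hjmax k hkm
          have := ht j hj
          linarith
        · exact h
      have hsum : ∑ m ∈ s, t m = (∑ m ∈ s.erase j, t m) + t j :=
        (Finset.sum_erase_add s t hj).symm
      linarith


/-- Lemma 3.6: if `p_max ≥ q_max`, `Q(O) > p_max`, `ε > 0` and `A ⊆ O` satisfies
`p_max < Q(A) ≤ (1+ε)·OPT1` and `p_max − ε·OPT1 < Q(O \ A) < p_max`, then there is a
feasible schedule of makespan `P(F) + Q(O) + p_max − Q(O \ A)` whose makespan is within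
a factor `1 + ε` of the optimum. -/
theorem stmt7 {J : Type*} [DecidableEq J] (F O : Finset J) (p q : J → ℝ)
    (hdisj : Disjoint F O)
    (hp : ∀ j ∈ F, 0 < p j) (hq : ∀ j ∈ O, 0 < q j)
    (hF : F.Nonempty) (hO : O.Nonempty)
    (hpq : O.sup' hO q ≤ F.sup' hF p)
    (hQO : F.sup' hF p < ∑ j ∈ O, q j)
    (OPT1 : ℝ)
    (hOPT1 : IsLeast {x : ℝ | ∃ X ⊆ O, x = (∑ j ∈ X, q j) ∧ F.sup' hF p < x} OPT1)
    (ε : ℝ) (hε : 0 < ε)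
    (A : Finset J) (hAO : A ⊆ O)
    (hA0 : F.sup' hF p < ∑ j ∈ A, q j)
    (hA1 : (∑ j ∈ A, q j) ≤ (1 + ε) * OPT1)
    (hA2 : F.sup' hF p - ε * OPT1 < ∑ j ∈ O \ A, q j)
    (hA3 : (∑ j ∈ O \ A, q j) < F.sup' hF p) :
    ∃ π : J → Fin 3 → ℝ, Feasible F O p q π ∧
      makespan F O p q π
        = (∑ j ∈ F, p j) + (∑ j ∈ O, q j) + F.sup' hF p - (∑ j ∈ O \ A, q j) ∧
      ∀ σ : J → Fin 3 → ℝ, Feasible F O p q σ →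
        makespan F O p q π < (1 + ε) * makespan F O p q σ := by
  classical
  letI : LinearOrder J := @linearOrderOfSTO _ WellOrderingRel _ (Classical.decRel _)
  set pm := F.sup' hF p with hpmdef
  set B := O \ A with hBdef
  have hOF : ∀ j ∈ O, j ∉ F := fun j hj hjF => (Finset.disjoint_left.1 hdisj hjF hj)
  have hq0 : ∀ j ∈ O, 0 ≤ q j := fun j hj => (hq j hj).le
  have hp0 : ∀ j ∈ F, 0 ≤ p j := fun j hj => (hp j hj).le
  have hBO : B ⊆ O := Finset.sdiff_subset
  have hA0' : ∀ j ∈ A, 0 ≤ q j := fun j hj => hq0 j (hAO hj)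
  have hB0' : ∀ j ∈ B, 0 ≤ q j := fun j hj => hq0 j (hBO hj)
  have hppm : ∀ j ∈ F, p j ≤ pm := fun j hj => Finset.le_sup' p hj
  have hqpm : ∀ j ∈ O, q j ≤ pm := fun j hj => (Finset.le_sup' q hj).trans hpq
  have hpmpos : 0 < pm := lt_of_lt_of_le (hp _ hF.choose_spec) (Finset.le_sup' p hF.choose_spec)
  set P := ∑ j ∈ F, p j with hPdef
  set QA := ∑ j ∈ A, q j with hQAdef
  set QB := ∑ j ∈ B, q j with hQBdef
  have hpmP : pm ≤ P := Finset.sup'_le hF p fun j hj => Finset.single_le_sum hp0 hj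
  have hpmQA : pm < QA := hA0
  have hQBpm : QB < pm := hA3
  have hQApos : 0 < QA := hpmpos.trans hpmQA
  have hQB0 : 0 ≤ QB := Finset.sum_nonneg hB0'
  have hQOsum : QB + QA = ∑ j ∈ O, q j := Finset.sum_sdiff hAO
  have hPpos : 0 < P := hpmpos.trans_le hpmP
  have hprevF : ∀ j, 0 ≤ prevS F p j := fun j => prevS_nonneg hp0 j
  have hprevA : ∀ j, 0 ≤ prevS A q j := fun j => prevS_nonneg hA0' j
  have hprevB : ∀ j, 0 ≤ prevS B q j := fun j => prevS_nonneg hB0' j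
  have hcF : ∀ j ∈ F, prevS F p j + p j ≤ P := fun j hj => prevS_add_le hp0 hj
  have hcA : ∀ j ∈ A, prevS A q j + q j ≤ QA := fun j hj => prevS_add_le hA0' hj
  have hcB : ∀ j ∈ B, prevS B q j + q j ≤ QB := fun j hj => prevS_add_le hB0' hj
  have same : ∀ (s : Finset J) (t' : J → ℝ), (∀ m ∈ s, 0 ≤ t' m) → ∀ j ∈ s, ∀ k ∈ s, j ≠ k →
      (prevS s t' j + t' j ≤ prevS s t' k ∨ prevS s t' k + t' k ≤ prevS s t' j) := by
    intro s t' ht' j hj k hk hne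
    rcases lt_trichotomy j k with h | h | h
    · exact Or.inl (prevS_chain ht' hj h)
    · exact absurd h hne
    · exact Or.inr (prevS_chain ht' hk h)
  set π : J → Fin 3 → ℝ := fun j =>
    if j ∈ F then ![prevS F p j, pm + prevS F p j, QA + pm + prevS F p j]
    else if j ∈ A then ![P + prevS A q j, pm + P + prevS A q j, prevS A q j]
    else ![P + QA + prevS B q j, prevS B q j, QA + prevS B q j] with hπdef
  have hfeas : Feasible F O p q π := by
    refine ⟨?_, ?_, ?_, ?_⟩
    · -- nonneg
      intro j hj i
      rcases Finset.mem_union.1 hj with hjF | hjO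
      · fin_cases i <;> simp [hπdef, hjF] <;>
          linarith [hprevF j, hpmpos.le, hQApos.le]
      · have hjF' : j ∉ F := hOF j hjO
        by_cases hjA : j ∈ A
        · fin_cases i <;> simp [hπdef, hjF', hjA] <;>
            linarith [hprevA j, hpmpos.le, hPpos.le, hQApos.le]
        · fin_cases i <;> simp [hπdef, hjF', hjA] <;>
            linarith [hprevB j, hpmpos.le, hPpos.le, hQApos.le]
    · -- machine disjointness
      intro i j hj k hk hne
      have facts : 0 ≤ QB ∧ QB ≤ pm ∧ pm ≤ P ∧ pm ≤ QA := ⟨hQB0, hQBpm.le, hpmP, hpmQA.le⟩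
      obtain ⟨f1, f2, f3, f4⟩ := facts
      rcases Finset.mem_union.1 hj with hjF | hjO
      · rcases Finset.mem_union.1 hk with hkF | hkO
        · -- F F
          rcases same F p hp0 j hjF k hkF hne with h | h <;>
            fin_cases i <;> simp [hπdef, jobTime, hjF, hkF] <;>
            first
              | (left; linarith)
              | (right; linarith)
        · have hkF' : k ∉ F := hOF k hkO
          by_cases hkA : k ∈ A
          · -- F A
            fin_cases i <;> simp [hπdef, jobTime, hjF, hkF', hkA] <;>
              first
                | (left; linarith [hcF j hjF, hprevA k, hcA k hkA, hprevF j])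
                | (right; linarith [hcF j hjF, hprevA k, hcA k hkA, hprevF j])
          · have hkB : k ∈ B := Finset.mem_sdiff.2 ⟨hkO, hkA⟩
            -- F B
            fin_cases i <;> simp [hπdef, jobTime, hjF, hkF', hkA] <;>
              first
                | (left; linarith [hcF j hjF, hprevB k, hcB k hkB, hprevF j])
                | (right; linarith [hcF j hjF, hprevB k, hcB k hkB, hprevF j])
      · have hjF' : j ∉ F := hOF j hjO
        by_cases hjA : j ∈ A
        · rcases Finset.mem_union.1 hk with hkF | hkO
          · -- A F
            fin_cases i <;> simp [hπdef, jobTime, hjF', hjA, hkF] <;>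
              first
                | (left; linarith [hcA j hjA, hprevF k, hcF k hkF, hprevA j])
                | (right; linarith [hcA j hjA, hprevF k, hcF k hkF, hprevA j])
          · have hkF' : k ∉ F := hOF k hkO
            by_cases hkA : k ∈ A
            · -- A A
              rcases same A q hA0' j hjA k hkA hne with h | h <;>
                fin_cases i <;> simp [hπdef, jobTime, hjF', hjA, hkF', hkA] <;>
                first
                  | (left; linarith)
                  | (right; linarith)
            · have hkB : k ∈ B := Finset.mem_sdiff.2 ⟨hkO, hkA⟩
              -- A B
              fin_cases i <;> simp [hπdef, jobTime, hjF', hjA, hkF', hkA] <;>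
                first
                  | (left; linarith [hcA j hjA, hprevB k, hcB k hkB, hprevA j])
                  | (right; linarith [hcA j hjA, hprevB k, hcB k hkB, hprevA j])
        · have hjB : j ∈ B := Finset.mem_sdiff.2 ⟨hjO, hjA⟩
          rcases Finset.mem_union.1 hk with hkF | hkO
          · -- B F
            fin_cases i <;> simp [hπdef, jobTime, hjF', hjA, hkF] <;>
              first
                | (left; linarith [hcB j hjB, hprevF k, hcF k hkF, hprevB j])
                | (right; linarith [hcB j hjB, hprevF k, hcF k hkF, hprevB j])
          · have hkF' : k ∉ F := hOF k hkO
            by_cases hkA : k ∈ A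
            · -- B A
              fin_cases i <;> simp [hπdef, jobTime, hjF', hjA, hkF', hkA] <;>
                first
                  | (left; linarith [hcB j hjB, hprevA k, hcA k hkA, hprevB j])
                  | (right; linarith [hcB j hjB, hprevA k, hcA k hkA, hprevB j])
            · have hkB : k ∈ B := Finset.mem_sdiff.2 ⟨hkO, hkA⟩
              -- B B
              rcases same B q hB0' j hjB k hkB hne with h | h <;>
                fin_cases i <;> simp [hπdef, jobTime, hjF', hjA, hkF', hkA] <;>
                first
                  | (left; linarith)
                  | (right; linarith)
    · -- per-job machine disjointness
      intro j hj i i' hii'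
      rcases Finset.mem_union.1 hj with hjF | hjO
      · fin_cases i <;> fin_cases i' <;>
          first
            | exact absurd rfl hii'
            | (simp only [hπdef, jobTime, if_pos hjF] ; simp <;>
                first
                  | (left; linarith [hppm j hjF, hpmQA.le])
                  | (right; linarith [hppm j hjF, hpmQA.le]))
      · have hjF' : j ∉ F := hOF j hjO
        by_cases hjA : j ∈ A
        · fin_cases i <;> fin_cases i' <;>
            first
              | exact absurd rfl hii'
              | (simp [hπdef, jobTime, hjF', hjA] <;>
                  first
                    | (left; linarith [hqpm j hjO, hpmP])
                    | (right; linarith [hqpm j hjO, hpmP]))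
        · fin_cases i <;> fin_cases i' <;>
            first
              | exact absurd rfl hii'
              | (simp [hπdef, jobTime, hjF', hjA] <;>
                  first
                    | (left; linarith [hqpm j hjO, hpmP, hpmQA.le])
                    | (right; linarith [hqpm j hjO, hpmP, hpmQA.le]))
    · -- flow constraints
      intro j hjF
      constructor <;> simp [hπdef, hjF] <;> linarith [hppm j hjF, hpmQA.le]
  have hms : makespan F O p q π = P + QA + pm := by
    unfold makespan
    apply IsGreatest.csSup_eq
    constructor
    · refine ⟨F.max' hF, Finset.mem_union_left _ (F.max'_mem hF), 2, ?_⟩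
      have h := prevS_max (s := F) (t := p) hF
      simp [hπdef, jobTime, F.max'_mem hF]
      linarith
    · rintro x ⟨j, hj, i, rfl⟩
      rcases Finset.mem_union.1 hj with hjF | hjO
      · fin_cases i <;> simp [hπdef, jobTime, hjF] <;>
          linarith [hcF j hjF, hpmpos.le, hQApos.le, hpmP, hpmQA.le]
      · have hjF' : j ∉ F := hOF j hjO
        by_cases hjA : j ∈ A
        · fin_cases i <;> simp [hπdef, jobTime, hjF', hjA] <;>
            linarith [hcA j hjA, hpmpos.le, hPpos.le, hQApos.le, hpmP, hpmQA.le]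
        · have hjB : j ∈ B := Finset.mem_sdiff.2 ⟨hjO, hjA⟩
          fin_cases i <;> simp [hπdef, jobTime, hjF', hjA] <;>
            linarith [hcB j hjB, hpmpos.le, hPpos.le, hQApos.le, hpmP, hpmQA.le, hQBpm.le]
  refine ⟨π, hfeas, ?_, ?_⟩
  · rw [hms, ← hQOsum]; ring
  · intro σ hσ
    obtain ⟨hσ0, hσ1, _, _⟩ := hσ
    have hbdd : BddAbove {x : ℝ | ∃ j ∈ F ∪ O, ∃ i : Fin 3, x = σ j i + jobTime F p q j} := by
      apply Set.Finite.bddAbove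
      have hsub : {x : ℝ | ∃ j ∈ F ∪ O, ∃ i : Fin 3, x = σ j i + jobTime F p q j}
          ⊆ (fun ji : J × Fin 3 => σ ji.1 ji.2 + jobTime F p q ji.1) ''
            ((↑(F ∪ O) : Set J) ×ˢ (Set.univ : Set (Fin 3))) := by
        rintro x ⟨j, hj, i, rfl⟩
        exact ⟨(j, i), ⟨by simpa using hj, trivial⟩, rfl⟩
      exact Set.Finite.subset (Set.Finite.image _
        (((F ∪ O).finite_toSet).prod Set.finite_univ)) hsub
    have htpos : ∀ j ∈ F ∪ O, 0 < jobTime F p q j := by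
      intro j hj
      rcases Finset.mem_union.1 hj with h | h
      · simpa [jobTime, h] using hp j h
      · simpa [jobTime, hOF j h] using hq j h
    have hFOne : (F ∪ O).Nonempty := ⟨hF.choose, Finset.mem_union_left _ hF.choose_spec⟩
    obtain ⟨j0, hj0, hbig⟩ := exists_late (F ∪ O) hFOne (jobTime F p q) htpos
      (fun j => σ j 0) (fun j hj => hσ0 j hj 0) (fun j hj k hk hne => hσ1 0 j hj k hk hne)
    have hsumsplit : ∑ j ∈ F ∪ O, jobTime F p q j = P + ∑ j ∈ O, q j := by
      rw [Finset.sum_union hdisj]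
      have h1 : ∑ j ∈ F, jobTime F p q j = P :=
        Finset.sum_congr rfl fun j hj => by simp [jobTime, hj]
      have h2 : ∑ j ∈ O, jobTime F p q j = ∑ j ∈ O, q j :=
        Finset.sum_congr rfl fun j hj => by simp [jobTime, hOF j hj]
      rw [h1, h2]
    have hle : P + (∑ j ∈ O, q j) ≤ makespan F O p q σ := by
      unfold makespan
      refine le_trans ?_ (le_csSup hbdd ⟨j0, hj0, 0, rfl⟩)
      linarith [hbig, hsumsplit.symm.le]
    obtain ⟨⟨X, hXO, hXeq, _⟩, _⟩ := hOPT1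
    have hOPT1le : OPT1 ≤ ∑ j ∈ O, q j := by
      rw [hXeq]
      exact Finset.sum_le_sum_of_subset_of_nonneg hXO (fun j hj _ => hq0 j hj)
    rw [hms]
    have h1 : ε * OPT1 ≤ ε * (∑ j ∈ O, q j) := mul_le_mul_of_nonneg_left hOPT1le hε.le
    have h2 : (1 + ε) * (P + ∑ j ∈ O, q j) ≤ (1 + ε) * makespan F O p q σ :=
      mul_le_mul_of_nonneg_left hle (by linarith)
    have hexp : (1 + ε) * (P + ∑ j ∈ O, q j)
        = P + (∑ j ∈ O, q j) + ε * P + ε * (∑ j ∈ O, q j) := by ring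
    have hεP : 0 ≤ ε * P := by positivity
    have hpmlt : pm < QB + ε * OPT1 := by linarith [hA2]
    linarith [hQOsum]

end
end

section
/- Suppose F is nonempty and O = {J_n} consists of a single open-shop job with processing time q_n satisfying p_max < q_n and P(F) > q_n. Then there exists a feasible schedule π with makespan(π) ≤ 2·q_n + P(F); consequently makespan(π) ≤ (4/3)·makespan(σ) for every feasible schedule σ. -/
open Finset

noncomputable section

/-- prefix sums giving disjoint intervals -/
lemma prefix_exists {J : Type*} [DecidableEq J] (F : Finset J) (p : J → ℝ)
    (hp : ∀ j ∈ F, 0 < p j) :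
    ∃ pre : J → ℝ, (∀ j ∈ F, 0 ≤ pre j) ∧ (∀ j ∈ F, pre j + p j ≤ ∑ k ∈ F, p k) ∧
      (∀ j ∈ F, ∀ k ∈ F, j ≠ k → pre j + p j ≤ pre k ∨ pre k + p k ≤ pre j) := by
  classical
  set r := @WellOrderingRel J with hr
  have hwo : IsWellOrder J r := WellOrderingRel.isWellOrder
  refine ⟨fun j => ∑ k ∈ F.filter (fun k => r k j), p k, ?_, ?_, ?_⟩
  · intro j hj
    exact Finset.sum_nonneg fun k hk => (hp k (Finset.mem_filter.mp hk).1).le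
  · intro j hj
    have hsub : insert j (F.filter (fun k => r k j)) ⊆ F := by
      intro x hx
      rcases Finset.mem_insert.mp hx with rfl | hx
      · exact hj
      · exact (Finset.mem_filter.mp hx).1
    have hnm : j ∉ F.filter (fun k => r k j) := by
      simp only [Finset.mem_filter]
      rintro ⟨-, h⟩
      exact irrefl_of r j h
    calc (∑ k ∈ F.filter (fun k => r k j), p k) + p j
        = ∑ k ∈ insert j (F.filter (fun k => r k j)), p k := by
          rw [Finset.sum_insert hnm]; ring
      _ ≤ ∑ k ∈ F, p k :=
          Finset.sum_le_sum_of_subset_of_nonneg hsub fun k hk _ => (hp k hk).le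
  · intro j hj k hk hne
    have key : ∀ a ∈ F, ∀ b ∈ F, r a b →
        (∑ x ∈ F.filter (fun x => r x a), p x) + p a ≤ ∑ x ∈ F.filter (fun x => r x b), p x := by
      intro a ha b hb hab
      have hnm : a ∉ F.filter (fun x => r x a) := by
        simp only [Finset.mem_filter]
        rintro ⟨-, h⟩
        exact irrefl_of r a h
      have hsub : insert a (F.filter (fun x => r x a)) ⊆ F.filter (fun x => r x b) := by
        intro x hx
        rcases Finset.mem_insert.mp hx with rfl | hx
        · exact Finset.mem_filter.mpr ⟨ha, hab⟩
        · obtain ⟨hxF, hxa⟩ := Finset.mem_filter.mp hx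
          exact Finset.mem_filter.mpr ⟨hxF, trans_of r hxa hab⟩
      calc (∑ x ∈ F.filter (fun x => r x a), p x) + p a
          = ∑ x ∈ insert a (F.filter (fun x => r x a)), p x := by
            rw [Finset.sum_insert hnm]; ring
        _ ≤ ∑ x ∈ F.filter (fun x => r x b), p x :=
            Finset.sum_le_sum_of_subset_of_nonneg hsub
              fun x hx _ => (hp x (Finset.mem_filter.mp hx).1).le
    rcases trichotomous_of r j k with h | h | h
    · exact Or.inl (key j hj k hk h)
    · exact absurd h hne
    · exact Or.inr (key k hk j hj h)

/-- disjoint intervals in [0,T] have total length ≤ T -/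
lemma interval_sum_le {J : Type*} [DecidableEq J] (a t : J → ℝ) :
    ∀ s : Finset J, (∀ j ∈ s, 0 ≤ a j) → (∀ j ∈ s, 0 < t j) →
    (∀ j ∈ s, ∀ k ∈ s, j ≠ k → a j + t j ≤ a k ∨ a k + t k ≤ a j) →
    ∀ T : ℝ, 0 ≤ T → (∀ j ∈ s, a j + t j ≤ T) → ∑ j ∈ s, t j ≤ T := by
  intro s
  induction s using Finset.strongInduction with
  | _ s ih =>
    intro ha ht hd T hT hend
    rcases s.eq_empty_or_nonempty with rfl | hs
    · simpa
    · obtain ⟨m, hm, hmax⟩ := s.exists_max_image a hs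
      have key : ∀ j ∈ s.erase m, a j + t j ≤ a m := by
        intro j hj
        have hjs := Finset.mem_of_mem_erase hj
        have hne := Finset.ne_of_mem_erase hj
        rcases hd j hjs m hm hne with h | h
        · exact h
        · have := hmax j hjs
          have := ht m hm
          linarith
      have hsum : ∑ j ∈ s.erase m, t j ≤ a m :=
        ih (s.erase m) (Finset.erase_ssubset hm)
          (fun j hj => ha j (Finset.mem_of_mem_erase hj))
          (fun j hj => ht j (Finset.mem_of_mem_erase hj))
          (fun j hj k hk hne => hd j (Finset.mem_of_mem_erase hj) k (Finset.mem_of_mem_erase hk) hne)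
          (a m) (ha m hm) key
      have : ∑ j ∈ s, t j = t m + ∑ j ∈ s.erase m, t j := by
        rw [← Finset.sum_erase_add s t hm]; ring
      have hendm := hend m hm
      linarith

/-- Theorem 4.1, second case: if `O = {jn}` with `p_max < q_n` and `P(F) > q_n`, then
there is a feasible schedule of makespan at most `2 q_n + P(F)`, which is a
`4/3`-approximation. -/
theorem stmt10 {J : Type*} [DecidableEq J] (F : Finset J) (jn : J) (p q : J → ℝ)
    (hdisj : Disjoint F {jn})
    (hp : ∀ j ∈ F, 0 < p j) (hq : 0 < q jn)
    (hF : F.Nonempty)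
    (hpq : F.sup' hF p < q jn) (hPF : q jn < ∑ j ∈ F, p j) :
    ∃ π : J → Fin 3 → ℝ, Feasible F {jn} p q π ∧
      makespan F {jn} p q π ≤ 2 * q jn + (∑ j ∈ F, p j) ∧
      ∀ σ : J → Fin 3 → ℝ, Feasible F {jn} p q σ →
        makespan F {jn} p q π ≤ (4 / 3) * makespan F {jn} p q σ := by
  classical
  set Q := q jn with hQ
  set P := ∑ j ∈ F, p j with hPdef
  have hjnF : jn ∉ F := Finset.disjoint_singleton_right.mp hdisj
  have hpQ : ∀ j ∈ F, p j < Q := fun j hj => lt_of_le_of_lt (Finset.le_sup' p hj) hpq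
  have hQP : Q < P := hPF
  obtain ⟨pre, hpre0, hpreP, hpredisj⟩ := prefix_exists F p hp
  -- the schedule
  set π : J → Fin 3 → ℝ := fun j i =>
    if j ∈ F then pre j + ![0, Q, 2 * Q] i else ![Q + P, 0, Q] i with hπ
  have hπF : ∀ j ∈ F, ∀ i : Fin 3, π j i = pre j + ![0, Q, 2 * Q] i := by
    intro j hj i; simp [hπ, hj]
  have hπn : ∀ i : Fin 3, π jn i = ![Q + P, 0, Q] i := by
    intro i; simp [hπ, hjnF]
  have hjtF : ∀ j ∈ F, jobTime F p q j = p j := by intro j hj; simp [jobTime, hj]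
  have hjtn : jobTime F p q jn = Q := by simp [jobTime, hjnF, hQ]
  have hmem : ∀ j, j ∈ F ∪ ({jn} : Finset J) ↔ j ∈ F ∨ j = jn := by
    intro j; simp [Finset.mem_union, or_comm]
  have hjnmem : jn ∈ F ∪ ({jn} : Finset J) := by simp
  have hfeas : Feasible F {jn} p q π := by
    refine ⟨?_, ?_, ?_, ?_⟩
    · -- nonneg
      intro j hj i
      rcases (hmem j).mp hj with hjF | rfl
      · rw [hπF j hjF i]
        have := hpre0 j hjF
        fin_cases i <;> simp <;> linarith
      · rw [hπn i]; fin_cases i <;> simp <;> linarith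
    · -- machine disjointness
      intro i j hj k hk hne
      rcases (hmem j).mp hj with hjF | rfl <;> rcases (hmem k).mp hk with hkF | rfl
      · rw [hπF j hjF i, hπF k hkF i, hjtF j hjF, hjtF k hkF]
        rcases hpredisj j hjF k hkF hne with h | h
        · left; linarith
        · right; linarith
      · rw [hπF j hjF i, hπn i, hjtF j hjF, hjtn]
        have h1 := hpre0 j hjF
        have h2 := hpreP j hjF
        have h3 := hpQ j hjF
        fin_cases i <;> simp <;> first | (left; linarith) | (right; linarith)
      · rw [hπF k hkF i, hπn i, hjtF k hkF, hjtn]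
        have h1 := hpre0 k hkF
        have h2 := hpreP k hkF
        have h3 := hpQ k hkF
        fin_cases i <;> simp <;> first | (left; linarith) | (right; linarith)
      · exact absurd rfl hne
    · -- job intervals disjoint
      intro j hj i i' hne
      rcases (hmem j).mp hj with hjF | rfl
      · rw [hπF j hjF i, hπF j hjF i', hjtF j hjF]
        have h3 := hpQ j hjF
        fin_cases i <;> fin_cases i' <;>
          first
          | exact absurd rfl hne
          | (simp <;> first | (left; linarith) | (right; linarith))
      · rw [hπn i, hπn i', hjtn]
        fin_cases i <;> fin_cases i' <;>
          first
          | exact absurd rfl hne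
          | (simp <;> first | (left; linarith) | (right; linarith))
    · -- flow order
      intro j hj
      rw [hπF j hj 0, hπF j hj 1, hπF j hj 2]
      have h3 := hpQ j hj
      constructor <;> simp <;> linarith
  have hcomp : ∀ x ∈ {x : ℝ | ∃ j ∈ F ∪ ({jn} : Finset J), ∃ i : Fin 3,
      x = π j i + jobTime F p q j}, x ≤ 2 * Q + P := by
    rintro x ⟨j, hj, i, rfl⟩
    rcases (hmem j).mp hj with hjF | rfl
    · rw [hπF j hjF i, hjtF j hjF]
      have h2 := hpreP j hjF
      have h3 := hpQ j hjF
      fin_cases i <;> simp <;> linarith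
    · rw [hπn i, hjtn]
      fin_cases i <;> simp <;> linarith
  have hmk : makespan F {jn} p q π ≤ 2 * Q + P := by
    apply Real.sSup_le hcomp
    linarith
  refine ⟨π, hfeas, hmk, ?_⟩
  intro σ hσ
  set M := makespan F {jn} p q σ with hM
  -- completions are below M
  have hfin : {x : ℝ | ∃ j ∈ F ∪ ({jn} : Finset J), ∃ i : Fin 3,
      x = σ j i + jobTime F p q j}.Finite := by
    apply Set.Finite.subset (Set.finite_range
      (fun ji : {j // j ∈ F ∪ ({jn} : Finset J)} × Fin 3 =>
        σ ji.1.1 ji.2 + jobTime F p q ji.1.1))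
    rintro x ⟨j, hj, i, rfl⟩
    exact ⟨(⟨j, hj⟩, i), rfl⟩
  have hub : ∀ j ∈ F ∪ ({jn} : Finset J), ∀ i : Fin 3,
      σ j i + jobTime F p q j ≤ M :=
    fun j hj i => le_csSup hfin.bddAbove ⟨j, hj, i, rfl⟩
  -- lower bound 1 : 3Q ≤ M
  have h3Q : 3 * Q ≤ M := by
    have h01 := hσ.2.2.1 jn hjnmem 0 1 (by decide)
    have h02 := hσ.2.2.1 jn hjnmem 0 2 (by decide)
    have h12 := hσ.2.2.1 jn hjnmem 1 2 (by decide)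
    rw [hjtn] at h01 h02 h12
    have hn0 := hσ.1 jn hjnmem 0
    have hn1 := hσ.1 jn hjnmem 1
    have hn2 := hσ.1 jn hjnmem 2
    have hkey : 2 * Q ≤ σ jn 0 ∨ 2 * Q ≤ σ jn 1 ∨ 2 * Q ≤ σ jn 2 := by
      rcases h01 with h | h <;> rcases h02 with h' | h' <;> rcases h12 with h'' | h'' <;>
        first | (left; linarith) | (right; left; linarith) | (right; right; linarith)
    rcases hkey with h | h | h
    · have := hub jn hjnmem 0; rw [hjtn] at this; linarith
    · have := hub jn hjnmem 1; rw [hjtn] at this; linarith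
    · have := hub jn hjnmem 2; rw [hjtn] at this; linarith
  -- lower bound 2 : Q + P ≤ M
  have hQPle : Q + P ≤ M := by
    have hsum : ∑ j ∈ F ∪ ({jn} : Finset J), jobTime F p q j = P + Q := by
      rw [Finset.sum_union hdisj, Finset.sum_singleton, hjtn]
      congr 1
      exact Finset.sum_congr rfl fun j hj => hjtF j hj
    have hle := interval_sum_le (fun j => σ j 2) (jobTime F p q) (F ∪ {jn})
      (fun j hj => hσ.1 j hj 2)
      (fun j hj => by
        rcases (hmem j).mp hj with hjF | rfl
        · rw [hjtF j hjF]; exact hp j hjF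
        · rw [hjtn]; exact hq)
      (fun j hj k hk hne => hσ.2.1 2 j hj k hk hne)
      M (by linarith)
      (fun j hj => hub j hj 2)
    rw [hsum] at hle
    linarith
  have hfinal : 2 * Q + P ≤ (4 / 3) * M := by
    rcases le_total P (2 * Q) with h | h <;> linarith
  linarith
end
end
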